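/- arXiv:1109.5996 — 6 statements merged into one kernel-verified Lean document; each statement's English description precedes it below -/
import Mathlib

section
/- Let 𝒜 be a pattern of size (i,m) (an m-tuple of i-element subsets of {1,...,m} such that each element of {1,...,m} occurs in exactly i of the sets) and ℬ a pattern of size (i,m'). If the number of column-even Latin rectangles with pattern 𝒜 differs from the number of column-odd ones, and the same holds for ℬ, then the number of column-even Latin rectangles with the concatenated pattern (𝒜, ℬ+m) differs from the number of column-odd ones. -/
open Finset

/-- A Latin `(i,m)`-rectangle. -/
def IsLatinRect {i m : ℕ} (A : Fin i → Fin m → Fin m) : Prop :=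
  (∀ p, Function.Bijective (A p)) ∧ ∀ q, Function.Injective fun p => A p q

/-- The column sign `ε_c(A)`. -/
def colSign {i m : ℕ} (A : Fin i → Fin m → Fin m) : ℤ :=
  ∏ q : Fin m, Int.sign (∏ p : Fin i, ∏ p' ∈ Finset.univ.filter (fun p' => p < p'),
    (((A p' q : ℕ) : ℤ) - ((A p q : ℕ) : ℤ)))

/-- The pattern of a rectangle: the tuple of underlying sets of its columns. -/
def patternOf {i m : ℕ} (A : Fin i → Fin m → Fin m) : Fin m → Finset (Fin m) :=
  fun q => Finset.image (fun p => A p q) Finset.univ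

/-- A pattern of size `(i,m)`: an `m`-tuple of `i`-element subsets of `Fin m` such that
each element of `Fin m` occurs in exactly `i` of the sets. -/
def IsPattern (i : ℕ) {m : ℕ} (P : Fin m → Finset (Fin m)) : Prop :=
  (∀ q, (P q).card = i) ∧ ∀ x : Fin m, (Finset.univ.filter fun q => x ∈ P q).card = i

/-- The number of column-even Latin rectangles with pattern `P`. -/
noncomputable def Lpos (i : ℕ) {m : ℕ} (P : Fin m → Finset (Fin m)) : ℕ :=
  Nat.card {A : Fin i → Fin m → Fin m // IsLatinRect A ∧ patternOf A = P ∧ colSign A = 1}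

/-- The number of column-odd Latin rectangles with pattern `P`. -/
noncomputable def Lneg (i : ℕ) {m : ℕ} (P : Fin m → Finset (Fin m)) : ℕ :=
  Nat.card {A : Fin i → Fin m → Fin m // IsLatinRect A ∧ patternOf A = P ∧ colSign A = -1}

/-- The concatenated pattern `(𝒜, ℬ + m)` of size `(i, m + m')`. -/
def concatPattern {m m' : ℕ} (P : Fin m → Finset (Fin m)) (P' : Fin m' → Finset (Fin m')) :
    Fin (m + m') → Finset (Fin (m + m')) :=
  Fin.append (fun q => (P q).image (Fin.castAdd m')) (fun q => (P' q).image (Fin.natAdd m))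

-- AUX START
open Classical in
/-- The finset of Latin rectangles with pattern `Q`. -/
noncomputable def rectSet (i : ℕ) {m : ℕ} (Q : Fin m → Finset (Fin m)) :
    Finset (Fin i → Fin m → Fin m) :=
  Finset.univ.filter (fun A => IsLatinRect A ∧ patternOf A = Q)

lemma mem_rectSet {i m : ℕ} {Q : Fin m → Finset (Fin m)} {A : Fin i → Fin m → Fin m} :
    A ∈ rectSet i Q ↔ IsLatinRect A ∧ patternOf A = Q := by
  simp [rectSet]

lemma sign_pm {x : ℤ} (h : x ≠ 0) : x.sign = 1 ∨ x.sign = -1 := by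
  rcases h.lt_or_gt with h | h
  · exact Or.inr (Int.sign_eq_neg_one_of_neg h)
  · exact Or.inl (Int.sign_eq_one_of_pos h)

lemma colSign_unit {i m : ℕ} {A : Fin i → Fin m → Fin m} (hA : IsLatinRect A) :
    colSign A = 1 ∨ colSign A = -1 := by
  rw [colSign]
  apply Finset.prod_induction _ (fun x => x = 1 ∨ x = -1)
  · rintro a b (ha | ha) (hb | hb) <;> simp [ha, hb]
  · left; rfl
  intro q _
  apply sign_pm
  apply Finset.prod_ne_zero_iff.mpr
  intro p _
  apply Finset.prod_ne_zero_iff.mpr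
  intro p' hp'
  have hne : A p q ≠ A p' q := by
    intro h
    have := hA.2 q h
    simp only [Finset.mem_filter] at hp'
    exact absurd this (ne_of_lt hp'.2)
  intro h
  apply hne
  have : ((A p q : ℕ) : ℤ) = ((A p' q : ℕ) : ℤ) := by omega
  exact Fin.ext (by exact_mod_cast this.symm) |>.symm ▸ rfl

lemma Lcount (i : ℕ) {m : ℕ} (Q : Fin m → Finset (Fin m)) :
    (Lpos i Q : ℤ) - (Lneg i Q : ℤ) = ∑ A ∈ rectSet i Q, colSign A := by
  classical
  have hpos : Lpos i Q = ((rectSet i Q).filter (fun A => colSign A = 1)).card := by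
    rw [Lpos, Nat.card_eq_fintype_card, Fintype.card_subtype]
    congr 1
    ext A
    simp [rectSet, and_assoc, and_comm, and_left_comm]
  have hneg : Lneg i Q = ((rectSet i Q).filter (fun A => colSign A = -1)).card := by
    rw [Lneg, Nat.card_eq_fintype_card, Fintype.card_subtype]
    congr 1
    ext A
    simp [rectSet, and_assoc, and_comm, and_left_comm]
  have hsplit := Finset.sum_filter_add_sum_filter_not (rectSet i Q)
    (fun A => colSign A = 1) colSign
  have h1 : ∑ A ∈ (rectSet i Q).filter (fun A => colSign A = 1), colSign A
      = ((rectSet i Q).filter (fun A => colSign A = 1)).card := by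
    rw [Finset.sum_congr rfl (fun A hA => (Finset.mem_filter.mp hA).2)]
    simp
  have h2 : ∑ A ∈ (rectSet i Q).filter (fun A => ¬ colSign A = 1), colSign A
      = -((rectSet i Q).filter (fun A => colSign A = -1)).card := by
    have he : (rectSet i Q).filter (fun A => ¬ colSign A = 1)
        = (rectSet i Q).filter (fun A => colSign A = -1) := by
      apply Finset.filter_congr
      intro A hA
      rcases colSign_unit (mem_rectSet.mp hA).1 with h | h <;> simp [h]
    rw [he, Finset.sum_congr rfl (fun A hA => (Finset.mem_filter.mp hA).2)]
    simp
  rw [hpos, hneg, ← hsplit, h1, h2]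
  ring

/-- Block-diagonal concatenation of rectangles. -/
def Phi {i m m' : ℕ} (B : (Fin i → Fin m → Fin m) × (Fin i → Fin m' → Fin m')) :
    Fin i → Fin (m + m') → Fin (m + m') :=
  fun p => Fin.append (fun q => Fin.castAdd m' (B.1 p q)) (fun q => Fin.natAdd m (B.2 p q))

lemma Phi_castAdd {i m m' : ℕ} (B) (p : Fin i) (q : Fin m) :
    Phi (m' := m') B p (Fin.castAdd m' q) = Fin.castAdd m' (B.1 p q) := by
  simp [Phi]

lemma Phi_natAdd {i m m' : ℕ} (B) (p : Fin i) (q : Fin m') :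
    Phi (m := m) B p (Fin.natAdd m q) = Fin.natAdd m (B.2 p q) := by
  simp [Phi]

lemma Phi_row {i m m' : ℕ} (B : (Fin i → Fin m → Fin m) × (Fin i → Fin m' → Fin m')) (p : Fin i) :
    Phi B p = finSumFinEquiv ∘ Sum.map (B.1 p) (B.2 p) ∘ finSumFinEquiv.symm := by
  funext q
  refine Fin.addCases (fun q => ?_) (fun q => ?_) q <;>
    simp [Phi_castAdd, Phi_natAdd]

lemma isLatin_Phi {i m m' : ℕ} (B : (Fin i → Fin m → Fin m) × (Fin i → Fin m' → Fin m')) :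
    IsLatinRect (Phi B) ↔ IsLatinRect B.1 ∧ IsLatinRect B.2 := by
  constructor
  · rintro ⟨hrow, hcol⟩
    refine ⟨⟨fun p => ?_, fun q => ?_⟩, ⟨fun p => ?_, fun q => ?_⟩⟩
    · have := hrow p
      rw [Phi_row] at this
      rw [Equiv.comp_bijective, Equiv.bijective_comp, Sum.map_bijective] at this
      exact this.1
    · intro p p' h
      apply hcol (Fin.castAdd m' q)
      simp only [Phi_castAdd, h]
    · have := hrow p
      rw [Phi_row] at this
      rw [Equiv.comp_bijective, Equiv.bijective_comp, Sum.map_bijective] at this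
      exact this.2
    · intro p p' h
      apply hcol (Fin.natAdd m q)
      simp only [Phi_natAdd, h]
  · rintro ⟨⟨h1r, h1c⟩, ⟨h2r, h2c⟩⟩
    constructor
    · intro p
      rw [Phi_row, Equiv.comp_bijective, Equiv.bijective_comp, Sum.map_bijective]
      exact ⟨h1r p, h2r p⟩
    · intro q
      refine Fin.addCases (fun q => ?_) (fun q => ?_) q
      · intro p p' h
        simp only [Phi_castAdd] at h
        apply h1c q
        show B.1 p q = B.1 p' q
        have hv := congrArg Fin.val h
        simp only [Fin.coe_castAdd] at hv
        exact Fin.ext hv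
      · intro p p' h
        simp only [Phi_natAdd] at h
        apply h2c q
        show B.2 p q = B.2 p' q
        have hv := congrArg Fin.val h
        simp only [Fin.coe_natAdd] at hv
        exact Fin.ext (by omega)

lemma pattern_Phi {i m m' : ℕ} (B : (Fin i → Fin m → Fin m) × (Fin i → Fin m' → Fin m')) :
    patternOf (Phi B) = concatPattern (patternOf B.1) (patternOf B.2) := by
  funext q
  refine Fin.addCases (fun q => ?_) (fun q => ?_) q
  · simp only [patternOf, concatPattern, Fin.append_left, Phi_castAdd]
    rw [Finset.image_image]
    rfl
  · simp only [patternOf, concatPattern, Fin.append_right, Phi_natAdd]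
    rw [Finset.image_image]
    rfl

lemma concat_inj {m m' : ℕ} {Q P : Fin m → Finset (Fin m)} {Q' P' : Fin m' → Finset (Fin m')}
    (h : concatPattern Q Q' = concatPattern P P') : Q = P ∧ Q' = P' := by
  constructor
  · funext q
    have := congrFun h (Fin.castAdd m' q)
    simp only [concatPattern, Fin.append_left] at this
    exact Finset.image_injective (fun a b hab => Fin.ext (by exact_mod_cast congrArg Fin.val hab)) this
  · funext q
    have := congrFun h (Fin.natAdd m q)
    simp only [concatPattern, Fin.append_right] at this
    refine Finset.image_injective (fun a b hab => ?_) this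
    have := congrArg Fin.val hab
    simp only [Fin.coe_natAdd] at this
    exact Fin.ext (by omega)

lemma colSign_Phi {i m m' : ℕ} (B : (Fin i → Fin m → Fin m) × (Fin i → Fin m' → Fin m')) :
    colSign (Phi B) = colSign B.1 * colSign B.2 := by
  rw [colSign, Fin.prod_univ_add]
  congr 1
  · apply Finset.prod_congr rfl
    intro q _
    congr 1
    apply Finset.prod_congr rfl; intro p _
    apply Finset.prod_congr rfl; intro p' _
    simp [Phi_castAdd]
  · apply Finset.prod_congr rfl
    intro q _
    congr 1
    apply Finset.prod_congr rfl; intro p _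
    apply Finset.prod_congr rfl; intro p' _
    simp only [Phi_natAdd, Fin.coe_natAdd]
    push_cast
    ring

lemma sum_colSign_concat {i m m' : ℕ} (P : Fin m → Finset (Fin m))
    (P' : Fin m' → Finset (Fin m')) :
    ∑ A ∈ rectSet i (concatPattern P P'), colSign A
      = (∑ A ∈ rectSet i P, colSign A) * (∑ A ∈ rectSet i P', colSign A) := by
  rw [Finset.sum_mul_sum, ← Finset.sum_product']
  refine (Finset.sum_nbij Phi ?_ ?_ ?_ ?_).symm
  · -- maps to
    rintro ⟨A₁, A₂⟩ hB
    rw [Finset.mem_product, mem_rectSet, mem_rectSet] at hB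
    rw [mem_rectSet, isLatin_Phi, pattern_Phi]
    exact ⟨⟨hB.1.1, hB.2.1⟩, by rw [hB.1.2, hB.2.2]⟩
  · -- injective
    rintro ⟨A₁, A₂⟩ _ ⟨B₁, B₂⟩ _ h
    have h1 : A₁ = B₁ := by
      funext p q
      have := congrFun (congrFun h p) (Fin.castAdd m' q)
      simp only [Phi_castAdd] at this
      exact Fin.ext (by exact_mod_cast congrArg Fin.val this)
    have h2 : A₂ = B₂ := by
      funext p q
      have := congrFun (congrFun h p) (Fin.natAdd m q)
      simp only [Phi_natAdd] at this
      have := congrArg Fin.val this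
      simp only [Fin.coe_natAdd] at this
      exact Fin.ext (by omega)
    rw [h1, h2]
  · -- surjective
    intro A hA
    rw [Finset.mem_coe, mem_rectSet] at hA
    have hb1 : ∀ p q, (A p (Fin.castAdd m' q)).val < m := by
      intro p q
      have hmem : A p (Fin.castAdd m' q) ∈ patternOf A (Fin.castAdd m' q) := by
        simp [patternOf]
      rw [hA.2] at hmem
      simp only [concatPattern, Fin.append_left, Finset.mem_image] at hmem
      obtain ⟨x, _, hx⟩ := hmem
      rw [← hx]
      exact x.isLt
    have hb2 : ∀ p q, m ≤ (A p (Fin.natAdd m q)).val := by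
      intro p q
      have hmem : A p (Fin.natAdd m q) ∈ patternOf A (Fin.natAdd m q) := by
        simp [patternOf]
      rw [hA.2] at hmem
      simp only [concatPattern, Fin.append_right, Finset.mem_image] at hmem
      obtain ⟨x, _, hx⟩ := hmem
      rw [← hx]
      simp [Fin.coe_natAdd]
    have hb2' : ∀ p q, (A p (Fin.natAdd m q)).val - m < m' := by
      intro p q
      have h1 := (A p (Fin.natAdd m q)).isLt
      have h2 := hb2 p q
      have h3 := q.isLt
      omega
    set A₁ : Fin i → Fin m → Fin m := fun p q => ⟨(A p (Fin.castAdd m' q)).val, hb1 p q⟩ with hA₁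
    set A₂ : Fin i → Fin m' → Fin m' := fun p q => ⟨(A p (Fin.natAdd m q)).val - m, hb2' p q⟩
      with hA₂
    have hPhi : Phi (A₁, A₂) = A := by
      funext p q
      refine Fin.addCases (fun q => ?_) (fun q => ?_) q
      · rw [Phi_castAdd]
        exact Fin.ext rfl
      · rw [Phi_natAdd]
        refine Fin.ext ?_
        have h2 := hb2 p q
        have hv : (A₂ p q).val = (A p (Fin.natAdd m q)).val - m := rfl
        rw [Fin.coe_natAdd, hv]
        omega
    refine ⟨(A₁, A₂), ?_, hPhi⟩
    rw [Finset.mem_coe, Finset.mem_product, mem_rectSet, mem_rectSet]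
    have hlat := hA.1
    rw [← hPhi, isLatin_Phi] at hlat
    have hpat : concatPattern (patternOf A₁) (patternOf A₂) = concatPattern P P' := by
      rw [← hA.2, ← hPhi]
      exact (pattern_Phi (A₁, A₂)).symm
    obtain ⟨e1, e2⟩ := concat_inj hpat
    exact ⟨⟨hlat.1, e1⟩, ⟨hlat.2, e2⟩⟩
  · -- values
    rintro ⟨A₁, A₂⟩ _
    exact (colSign_Phi _).symm


/-- If both patterns have unequal numbers of column-even and column-odd Latin rectangles,
then so does the concatenated pattern. -/
theorem concatPattern_Lpos_ne_Lneg {i m m' : ℕ}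
    (P : Fin m → Finset (Fin m)) (P' : Fin m' → Finset (Fin m'))
    (hP : IsPattern i P) (hP' : IsPattern i P')
    (h1 : Lpos i P ≠ Lneg i P) (h2 : Lpos i P' ≠ Lneg i P') :
    Lpos i (concatPattern P P') ≠ Lneg i (concatPattern P P') := by
  have key : (Lpos i (concatPattern P P') : ℤ) - Lneg i (concatPattern P P')
      = ((Lpos i P : ℤ) - Lneg i P) * ((Lpos i P' : ℤ) - Lneg i P') := by
    rw [Lcount, Lcount, Lcount, sum_colSign_concat]
  intro h
  rw [h, sub_self] at key
  have d1 : (Lpos i P : ℤ) - Lneg i P ≠ 0 := sub_ne_zero.mpr (by exact_mod_cast h1)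
  have d2 : (Lpos i P' : ℤ) - Lneg i P' ≠ 0 := sub_ne_zero.mpr (by exact_mod_cast h2)
  exact (mul_ne_zero d1 d2) key.symm
end

section
/- The map sending a Latin (i,m)-rectangle to the Latin (i-1,m)-rectangle obtained by deleting its last row is injective, and its image is exactly the union of L_ℬ over those (i-1,m)-patterns ℬ that arise as the pattern of the top i-1 rows of some Latin (i,m)-rectangle with a fixed pattern 𝒜. Moreover, for each such ℬ there is a sign ε(ℬ) ∈ {±1} such that the preimage of the column-even (resp. column-odd) rectangles with pattern ℬ is contained in the column-ε(ℬ)-even (resp. opposite) rectangles with pattern 𝒜. -/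
open Finset

/-- Deleting the last row of an `(i+1) × m` rectangle. -/
def delLastRow {i m : ℕ} (A : Fin (i + 1) → Fin m → Fin m) : Fin i → Fin m → Fin m :=
  fun p => A p.castSucc

section Helpers

variable {i m : ℕ}

lemma mem_pattern (A : Fin i → Fin m → Fin m) (p : Fin i) (q : Fin m) :
    A p q ∈ patternOf A q :=
  Finset.mem_image_of_mem _ (Finset.mem_univ p)

lemma isLatin_del {A : Fin (i + 1) → Fin m → Fin m} (h : IsLatinRect A) :
    IsLatinRect (delLastRow A) :=
  ⟨fun p => h.1 p.castSucc, fun q _ _ hab => Fin.castSucc_injective i (h.2 q hab)⟩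

lemma pattern_succ (A : Fin (i + 1) → Fin m → Fin m) (q : Fin m) :
    patternOf A q = insert (A (Fin.last i) q) (patternOf (delLastRow A) q) := by
  simp only [patternOf, delLastRow]
  ext x
  simp only [Finset.mem_image, Finset.mem_univ, true_and, Finset.mem_insert]
  rw [Fin.exists_fin_succ']
  constructor
  · rintro (⟨j, hj⟩ | h)
    · exact Or.inr ⟨j, hj⟩
    · exact Or.inl h.symm
  · rintro (h | ⟨j, hj⟩)
    · exact Or.inr h.symm
    · exact Or.inl ⟨j, hj⟩

lemma last_notMem {A : Fin (i + 1) → Fin m → Fin m} (h : IsLatinRect A) (q : Fin m) :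
    A (Fin.last i) q ∉ patternOf (delLastRow A) q := by
  simp only [patternOf, delLastRow, Finset.mem_image, Finset.mem_univ, true_and]
  rintro ⟨p, hp⟩
  exact absurd (h.2 q hp) (Fin.castSucc_lt_last p).ne

lemma last_eq {A A' : Fin (i + 1) → Fin m → Fin m} (hA : IsLatinRect A)
    (hp : patternOf A = patternOf A')
    (ht : patternOf (delLastRow A) = patternOf (delLastRow A')) (q : Fin m) :
    A (Fin.last i) q = A' (Fin.last i) q := by
  have h1 : A (Fin.last i) q ∈ patternOf A' q := by
    rw [← hp]; exact mem_pattern A _ q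
  rw [pattern_succ A' q, Finset.mem_insert] at h1
  rcases h1 with h1 | h1
  · exact h1
  · rw [← ht] at h1
    exact absurd h1 (last_notMem hA q)

lemma filter_castSucc_lt (p : Fin i) :
    (Finset.univ.filter (fun p' : Fin (i + 1) => p.castSucc < p'))
      = insert (Fin.last i)
        ((Finset.univ.filter (fun p' : Fin i => p < p')).map Fin.castSuccEmb) := by
  ext p'
  simp only [Finset.mem_filter, Finset.mem_univ, true_and, Finset.mem_insert, Finset.mem_map,
    Fin.castSuccEmb_apply]
  constructor
  · intro h
    rcases Fin.eq_castSucc_or_eq_last p' with ⟨j, rfl⟩ | rfl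
    · exact Or.inr ⟨j, Fin.castSucc_lt_castSucc_iff.mp h, rfl⟩
    · exact Or.inl rfl
  · rintro (rfl | ⟨j, hj, rfl⟩)
    · exact Fin.castSucc_lt_last p
    · exact Fin.castSucc_lt_castSucc_iff.mpr hj

lemma col_prod_split (A : Fin (i + 1) → Fin m → Fin m) (q : Fin m) :
    (∏ p : Fin (i + 1), ∏ p' ∈ Finset.univ.filter (fun p' => p < p'),
      (((A p' q : ℕ) : ℤ) - ((A p q : ℕ) : ℤ)))
    = (∏ p : Fin i, ∏ p' ∈ Finset.univ.filter (fun p' => p < p'),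
        (((delLastRow A p' q : ℕ) : ℤ) - ((delLastRow A p q : ℕ) : ℤ)))
      * ∏ p : Fin i, (((A (Fin.last i) q : ℕ) : ℤ) - ((A p.castSucc q : ℕ) : ℤ)) := by
  rw [Fin.prod_univ_castSucc]
  have hlast : (Finset.univ.filter (fun p' : Fin (i + 1) => Fin.last i < p')) = ∅ := by
    apply Finset.filter_eq_empty_iff.mpr
    intro p' _
    exact (Fin.le_last p').not_gt
  rw [hlast, Finset.prod_empty, mul_one, ← Finset.prod_mul_distrib]
  refine Finset.prod_congr rfl fun p _ => ?_
  rw [filter_castSucc_lt p]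
  have hnm : Fin.last i ∉ (Finset.univ.filter (fun p' : Fin i => p < p')).map Fin.castSuccEmb := by
    simp only [Finset.mem_map, Fin.castSuccEmb_apply]
    rintro ⟨j, _, hj⟩
    exact absurd hj (Fin.castSucc_lt_last j).ne
  rw [Finset.prod_insert hnm, Finset.prod_map, mul_comm]
  rfl

lemma colSign_split (A : Fin (i + 1) → Fin m → Fin m) :
    colSign A = colSign (delLastRow A)
      * ∏ q : Fin m, Int.sign (∏ p : Fin i,
          (((A (Fin.last i) q : ℕ) : ℤ) - ((A p.castSucc q : ℕ) : ℤ))) := by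
  unfold colSign
  rw [← Finset.prod_mul_distrib]
  refine Finset.prod_congr rfl fun q _ => ?_
  rw [col_prod_split, Int.sign_mul]

lemma extra_prod_eq {A : Fin (i + 1) → Fin m → Fin m} (hA : IsLatinRect A) (q : Fin m) :
    (∏ p : Fin i, (((A (Fin.last i) q : ℕ) : ℤ) - ((A p.castSucc q : ℕ) : ℤ)))
      = ∏ y ∈ patternOf (delLastRow A) q,
          (((A (Fin.last i) q : ℕ) : ℤ) - ((y : ℕ) : ℤ)) := by
  rw [patternOf, Finset.prod_image]
  · rfl
  · intro a _ b _ hab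
    exact (isLatin_del hA).2 q hab

end Helpers
section Helpers2

variable {i m : ℕ}

lemma pm_one_prod {s : Finset (Fin m)} {f : Fin m → ℤ} (h : ∀ q ∈ s, f q = 1 ∨ f q = -1) :
    (∏ q ∈ s, f q) = 1 ∨ (∏ q ∈ s, f q) = -1 := by
  refine Finset.prod_induction f (fun z => z = 1 ∨ z = -1) ?_ (Or.inl rfl) h
  rintro a b (ha | ha) (hb | hb) <;> simp [ha, hb]

lemma sign_pm_s3 {z : ℤ} (hz : z ≠ 0) : Int.sign z = 1 ∨ Int.sign z = -1 := by
  rcases hz.lt_or_gt with h | h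
  · exact Or.inr (Int.sign_eq_neg_one_iff_neg.mpr h)
  · exact Or.inl (Int.sign_eq_one_iff_pos.mpr h)

lemma sub_ne {a b : Fin m} (h : a ≠ b) : ((a : ℕ) : ℤ) - ((b : ℕ) : ℤ) ≠ 0 := by
  intro hz
  exact h (Fin.val_injective (by exact_mod_cast sub_eq_zero.mp hz))

lemma extra_pm {A : Fin (i + 1) → Fin m → Fin m} (hA : IsLatinRect A) :
    (∏ q : Fin m, Int.sign (∏ p : Fin i,
      (((A (Fin.last i) q : ℕ) : ℤ) - ((A p.castSucc q : ℕ) : ℤ)))) = 1 ∨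
    (∏ q : Fin m, Int.sign (∏ p : Fin i,
      (((A (Fin.last i) q : ℕ) : ℤ) - ((A p.castSucc q : ℕ) : ℤ)))) = -1 := by
  refine pm_one_prod fun q _ => sign_pm_s3 ?_
  refine Finset.prod_ne_zero_iff.mpr fun p _ => sub_ne fun h => ?_
  exact absurd (hA.2 q h) (Fin.castSucc_lt_last p).ne'

end Helpers2

/-- Deleting the last row is injective on the Latin rectangles with a fixed pattern `𝒜`;
its image consists exactly of those Latin `(i,m)`-rectangles whose pattern arises as the
pattern of the top `i` rows of some Latin `(i+1,m)`-rectangle with pattern `𝒜`; and for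
every such pattern `ℬ` there is a sign `ε(ℬ) ∈ {±1}` with
`ε_c(A) = ε(ℬ) · ε_c(delLastRow A)` for all `A ∈ L_𝒜` whose truncation has pattern `ℬ`. -/
theorem delLastRow_injOn_image_sign {i m : ℕ} (𝒜 : Fin m → Finset (Fin m))
    (h𝒜 : IsPattern (i + 1) 𝒜) :
    Set.InjOn delLastRow {A : Fin (i + 1) → Fin m → Fin m | IsLatinRect A ∧ patternOf A = 𝒜} ∧
    delLastRow '' {A : Fin (i + 1) → Fin m → Fin m | IsLatinRect A ∧ patternOf A = 𝒜}
      = {B : Fin i → Fin m → Fin m | IsLatinRect B ∧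
          ∃ A : Fin (i + 1) → Fin m → Fin m, IsLatinRect A ∧ patternOf A = 𝒜 ∧
            patternOf (delLastRow A) = patternOf B} ∧
    ∀ ℬ : Fin m → Finset (Fin m),
      (∃ A : Fin (i + 1) → Fin m → Fin m, IsLatinRect A ∧ patternOf A = 𝒜 ∧
          patternOf (delLastRow A) = ℬ) →
      ∃ ε : ℤ, (ε = 1 ∨ ε = -1) ∧
        ∀ A : Fin (i + 1) → Fin m → Fin m, IsLatinRect A → patternOf A = 𝒜 →
          patternOf (delLastRow A) = ℬ → colSign A = ε * colSign (delLastRow A) := by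
  refine ⟨?_, ?_, ?_⟩
  · -- injectivity
    rintro A ⟨hA, hpA⟩ A' ⟨hA', hpA'⟩ hdel
    funext p q
    rcases Fin.eq_castSucc_or_eq_last p with ⟨j, rfl⟩ | rfl
    · exact congrFun (congrFun hdel j) q
    · exact last_eq hA (hpA.trans hpA'.symm) (by rw [hdel]) q
  · -- image
    ext B
    constructor
    · rintro ⟨A, ⟨hA, hpA⟩, rfl⟩
      exact ⟨isLatin_del hA, A, hA, hpA, rfl⟩
    · rintro ⟨hB, A, hA, hpA, hpat⟩
      refine ⟨Fin.snoc B (A (Fin.last i)), ⟨⟨?_, ?_⟩, ?_⟩, ?_⟩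
      · intro p
        rcases Fin.eq_castSucc_or_eq_last p with ⟨j, rfl⟩ | rfl
        · simpa using hB.1 j
        · simpa using hA.1 (Fin.last i)
      · intro q a b hab
        simp only at hab
        rcases Fin.eq_castSucc_or_eq_last a with ⟨ja, rfl⟩ | rfl <;>
          rcases Fin.eq_castSucc_or_eq_last b with ⟨jb, rfl⟩ | rfl
        · simp only [Fin.snoc_castSucc] at hab
          exact congrArg Fin.castSucc (hB.2 q hab)
        · rw [Fin.snoc_castSucc, Fin.snoc_last] at hab
          exact absurd (hpat ▸ (hab ▸ mem_pattern B ja q)) (last_notMem hA q)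
        · rw [Fin.snoc_castSucc, Fin.snoc_last] at hab
          exact absurd (hpat ▸ (hab ▸ mem_pattern B jb q)) (last_notMem hA q)
        · rfl
      · funext q
        rw [pattern_succ, ← hpA, pattern_succ A q]
        have hd : delLastRow (Fin.snoc B (A (Fin.last i)) : Fin (i+1) → Fin m → Fin m) = B := by
          funext p q; simp [delLastRow]
        rw [hd, hpat, Fin.snoc_last]
      · funext p q; simp [delLastRow]
  · -- sign
    rintro ℬ ⟨A₀, hA₀, hpA₀, hpat₀⟩
    refine ⟨∏ q : Fin m, Int.sign (∏ p : Fin i,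
        (((A₀ (Fin.last i) q : ℕ) : ℤ) - ((A₀ p.castSucc q : ℕ) : ℤ))), extra_pm hA₀, ?_⟩
    intro A hA hpA hpat
    rw [colSign_split A, mul_comm]
    congr 1
    refine Finset.prod_congr rfl fun q _ => ?_
    have hl : A₀ (Fin.last i) q = A (Fin.last i) q :=
      last_eq hA₀ (hpA₀.trans hpA.symm) (hpat₀.trans hpat.symm) q
    rw [extra_prod_eq hA q, extra_prod_eq hA₀ q, hl, hpat, hpat₀]
end

section
/- Let m be even, m' = m/2, and let E_{j,j} denote the i×i matrix with 1 in entry (j,j) and 0 elsewhere. Then the polynomial A ↦ (det A)^{m'} on i×i matrices, polarized to a symmetric multilinear function of i·m' matrix arguments and evaluated on the arguments consisting of m' copies each of E_{j_1,j_1},...,E_{j_i,j_i}, is nonzero exactly when j_1,...,j_i is a permutation of 1,...,i, in which case it equals (m'!)^i/(im')! times the number of orderings, i.e. the full sum over all (j_1,...,j_i) ∈ {1,...,i}^i equals i!(m'!)^i/(im')! ≠ 0. -/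
open Finset MvPolynomial Matrix Function

/-- The squarefree exponent `t_1 ⋯ t_{i m'}`, variables indexed by pairs `(a, r)` with
`a ∈ Fin i` and `r ∈ Fin m'` (the argument slots: `m'` copies for each `a`). -/
noncomputable def sfExp (i m' : ℕ) : (Fin i × Fin m') →₀ ℕ :=
  Finsupp.equivFunOnFinite.symm fun _ => 1

/-- The polarization of `A ↦ (det A)^{m'}` (a homogeneous polynomial of degree `i·m'` on
`i × i` matrices), evaluated on the `i·m'` arguments consisting of `m'` copies each of
`E_{j_1,j_1}, ..., E_{j_i,j_i}`: it is `(1/(i m')!)` times the coefficient of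
`t_1 ⋯ t_{i m'}` in `(det ∑_{(a,r)} t_{(a,r)} E_{j_a, j_a})^{m'}`. -/
noncomputable def polarDetPow (i m' : ℕ) (j : Fin i → Fin i) : ℚ :=
  (((i * m').factorial : ℚ))⁻¹ *
    MvPolynomial.coeff (sfExp i m')
      ((Matrix.det (∑ p : Fin i × Fin m',
          Matrix.single (j p.1) (j p.1)
            (MvPolynomial.X p : MvPolynomial (Fin i × Fin m') ℚ))) ^ m')


variable {i m' : ℕ}

lemma sum_std (j : Fin i → Fin i) :
    (∑ p : Fin i × Fin m', Matrix.single (j p.1) (j p.1) (X p : MvPolynomial (Fin i × Fin m') ℚ))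
      = Matrix.diagonal (fun b => ∑ p : Fin i × Fin m', if j p.1 = b then X p else 0) := by
  refine Matrix.ext fun b c => ?_
  simp only [Matrix.sum_apply, Matrix.single, Matrix.diagonal, Matrix.of_apply]
  by_cases h : b = c
  · subst h
    rw [if_pos rfl]
    refine Finset.sum_congr rfl fun p _ => ?_
    by_cases hp : j p.1 = b <;> simp [hp]
  · rw [if_neg h]
    refine Finset.sum_eq_zero fun p _ => ?_
    by_cases hp : j p.1 = b <;> by_cases hq : j p.1 = c <;> simp_all

lemma prod_X_eq_monomial (g : (Fin i × Fin m') → (Fin i × Fin m')) (s : Finset (Fin i × Fin m')) :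
    (∏ q ∈ s, (X (g q) : MvPolynomial (Fin i × Fin m') ℚ))
      = monomial (∑ q ∈ s, Finsupp.single (g q) 1) (1 : ℚ) := by
  classical
  induction s using Finset.induction with
  | empty => simp
  | insert a s h ih =>
    rw [Finset.prod_insert h, Finset.sum_insert h, ih, X, monomial_mul, one_mul]

lemma sum_single_eq_sfExp_iff (g : (Fin i × Fin m') → (Fin i × Fin m')) :
    (∑ q : Fin i × Fin m', Finsupp.single (g q) 1 = sfExp i m') ↔ Function.Bijective g := by
  classical
  rw [Function.bijective_iff_existsUnique, Finsupp.ext_iff]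
  have h1 : ∀ p, (∑ q : Fin i × Fin m', Finsupp.single (g q) 1) p
      = (univ.filter (fun q => g q = p)).card := by
    intro p
    rw [Finsupp.finset_sum_apply, Finset.card_filter]
    exact Finset.sum_congr rfl fun q _ => Finsupp.single_apply
  have h2 : ∀ p, sfExp i m' p = 1 := fun p => rfl
  constructor
  · intro h p
    have := (h p).symm
    rw [h1, h2] at this
    obtain ⟨a, ha⟩ := Finset.card_eq_one.1 this.symm
    refine ⟨a, ?_, ?_⟩
    · have : a ∈ univ.filter (fun q => g q = p) := ha ▸ Finset.mem_singleton_self a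
      simpa using this
    · intro y hy
      have : y ∈ univ.filter (fun q => g q = p) := by simpa using hy
      rw [ha] at this; simpa using this
  · intro h p
    rw [h1, h2]
    obtain ⟨a, ha, hu⟩ := h p
    rw [Finset.card_eq_one]
    refine ⟨a, Finset.ext fun y => ?_⟩
    simp only [Finset.mem_filter, Finset.mem_univ, true_and, Finset.mem_singleton]
    exact ⟨fun hy => hu y hy, fun hy => hy ▸ ha⟩

lemma coeff_formula (j : Fin i → Fin i) :
    MvPolynomial.coeff (sfExp i m')
      ((Matrix.det (∑ p : Fin i × Fin m',
          Matrix.single (j p.1) (j p.1)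
            (MvPolynomial.X p : MvPolynomial (Fin i × Fin m') ℚ))) ^ m')
      = ((univ.filter (fun g : (Fin i × Fin m') → (Fin i × Fin m') =>
          (∀ q, j ((g q).1) = q.1) ∧ Function.Bijective g)).card : ℚ) := by
  classical
  rw [sum_std, Matrix.det_diagonal]
  have hprod : (∏ b : Fin i, ∑ p : Fin i × Fin m', if j p.1 = b then (X p : MvPolynomial (Fin i × Fin m') ℚ) else 0) ^ m'
      = ∏ q : Fin i × Fin m', ∑ p : Fin i × Fin m', if j p.1 = q.1 then (X p : MvPolynomial (Fin i × Fin m') ℚ) else 0 := by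
    rw [← Finset.prod_pow, Fintype.prod_prod_type]
    refine Finset.prod_congr rfl fun b _ => ?_
    calc (∑ p : Fin i × Fin m', if j p.1 = b then (X p : MvPolynomial (Fin i × Fin m') ℚ) else 0) ^ m'
        = ∏ _y : Fin m', (∑ p : Fin i × Fin m', if j p.1 = b then (X p : MvPolynomial (Fin i × Fin m') ℚ) else 0) := by
          rw [Finset.prod_const, Finset.card_univ, Fintype.card_fin]
      _ = ∏ y : Fin m', ∑ p : Fin i × Fin m', if j p.1 = (b, y).1 then (X p : MvPolynomial (Fin i × Fin m') ℚ) else 0 := rfl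
  rw [hprod, Fintype.prod_sum]
  rw [MvPolynomial.coeff_sum]
  have : ∀ g : (Fin i × Fin m') → (Fin i × Fin m'),
      MvPolynomial.coeff (sfExp i m')
        (∏ q : Fin i × Fin m', if j ((g q).1) = q.1 then (X (g q) : MvPolynomial (Fin i × Fin m') ℚ) else 0)
      = if (∀ q, j ((g q).1) = q.1) ∧ Function.Bijective g then 1 else 0 := by
    intro g
    rw [Fintype.prod_ite_zero]
    split_ifs with h1 h2 h2
    · rw [prod_X_eq_monomial, MvPolynomial.coeff_monomial,
        if_pos ((sum_single_eq_sfExp_iff g).2 h2.2)]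
    · rw [prod_X_eq_monomial, MvPolynomial.coeff_monomial,
        if_neg (fun hh => (h2 ⟨h1, (sum_single_eq_sfExp_iff g).1 hh⟩))]
    · exact absurd h2.1 h1
    · exact MvPolynomial.coeff_zero _
  rw [Finset.sum_congr rfl fun g _ => this g, Finset.sum_boole]

lemma card_eq_zero_of_not_bij (hm' : 0 < m') (j : Fin i → Fin i) (hj : ¬ Function.Bijective j) :
    (univ.filter (fun g : (Fin i × Fin m') → (Fin i × Fin m') =>
        (∀ q, j ((g q).1) = q.1) ∧ Function.Bijective g)).card = 0 := by
  rw [Finset.card_eq_zero, Finset.filter_eq_empty_iff]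
  rintro g - ⟨hP, -⟩
  exact hj (Finite.surjective_iff_bijective.1 fun b => ⟨(g (b, ⟨0, hm'⟩)).1, hP (b, ⟨0, hm'⟩)⟩)

lemma card_eq_of_bij (j : Fin i → Fin i) (hj : Function.Bijective j) :
    (univ.filter (fun g : (Fin i × Fin m') → (Fin i × Fin m') =>
        (∀ q, j ((g q).1) = q.1) ∧ Function.Bijective g)).card = m'.factorial ^ i := by
  classical
  rw [← Fintype.card_subtype]
  set e : Fin i ≃ Fin i := Equiv.ofBijective j hj with he
  have hkey : ∀ f : Fin i → Equiv.Perm (Fin m'),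
      (∀ q : Fin i × Fin m', j (((Equiv.prodShear e.symm f) q).1) = q.1) ∧
        Function.Bijective (Equiv.prodShear e.symm f) := by
    intro f
    refine ⟨fun q => ?_, (Equiv.prodShear e.symm f).bijective⟩
    show j (e.symm q.1) = q.1
    have : e (e.symm q.1) = q.1 := e.apply_symm_apply q.1
    rwa [he, Equiv.ofBijective_apply] at this
  have hbij : Function.Bijective (fun f : Fin i → Equiv.Perm (Fin m') =>
      (⟨(Equiv.prodShear e.symm f : (Fin i × Fin m') → (Fin i × Fin m')), hkey f⟩ :
        {g : (Fin i × Fin m') → (Fin i × Fin m') //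
          (∀ q, j ((g q).1) = q.1) ∧ Function.Bijective g})) := by
    constructor
    · intro f1 f2 hf
      have hf' := congrArg Subtype.val hf
      funext b
      ext s
      have h2 := congrArg Prod.snd (congrFun hf' (b, s))
      simp only [Equiv.prodShear, Equiv.coe_fn_mk] at h2
      exact congrArg Fin.val h2
    · rintro ⟨g, hP, hgb⟩
      have hfst : ∀ q : Fin i × Fin m', (g q).1 = e.symm q.1 := by
        intro q
        apply e.injective
        rw [Equiv.apply_symm_apply, he, Equiv.ofBijective_apply]
        exact hP q
      have hinj : ∀ b : Fin i, Function.Injective (fun s : Fin m' => (g (b, s)).2) := by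
        intro b s s' hss
        have : g (b, s) = g (b, s') :=
          Prod.ext_iff.2 ⟨by rw [hfst (b, s), hfst (b, s')], hss⟩
        have := hgb.1 this
        exact (Prod.ext_iff.1 this).2
      refine ⟨fun b => Equiv.ofBijective _ ((Finite.injective_iff_bijective).1 (hinj b)), ?_⟩
      refine Subtype.ext (funext fun q => ?_)
      show (e.symm q.1, (g (q.1, q.2)).2) = g q
      symm
      exact Prod.ext_iff.2 ⟨hfst q, rfl⟩
  rw [← Fintype.card_of_bijective hbij]
  simp [Fintype.card_perm]

lemma card_bij_fun : (univ.filter (fun j : Fin i → Fin i => Function.Bijective j)).card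
    = i.factorial := by
  classical
  rw [← Fintype.card_subtype]
  have hbij : Function.Bijective (fun e : Fin i ≃ Fin i =>
      (⟨(e : Fin i → Fin i), e.bijective⟩ : {f : Fin i → Fin i // Function.Bijective f})) := by
    constructor
    · intro e1 e2 hf
      exact Equiv.coe_fn_injective (congrArg Subtype.val hf)
    · rintro ⟨f, hf⟩
      exact ⟨Equiv.ofBijective f hf, rfl⟩
  rw [← Fintype.card_of_bijective hbij]
  simp [Fintype.card_perm]


/-- Let `m` be even, `m' = m/2`.  The polarization of `det^{m'}` on `m'` copies each of
`E_{j_1,j_1},...,E_{j_i,j_i}` is nonzero exactly when `(j_1,...,j_i)` is a permutation of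
`(1,...,i)`, and the full sum over all tuples equals `i!(m'!)^i/(i m')! ≠ 0`. -/
theorem polarDetPow_ne_zero_iff_and_sum (m m' i : ℕ) (hm : m = 2 * m') (hm' : 0 < m')
    (hi1 : 1 ≤ i) (him : i ≤ m) :
    (∀ j : Fin i → Fin i, polarDetPow i m' j ≠ 0 ↔ Function.Bijective j) ∧
    (∑ j : Fin i → Fin i, polarDetPow i m' j
      = (i.factorial : ℚ) * (m'.factorial : ℚ) ^ i / ((i * m').factorial : ℚ)) ∧
    (i.factorial : ℚ) * (m'.factorial : ℚ) ^ i / ((i * m').factorial : ℚ) ≠ 0 := by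
  classical
  have hN : (((i * m').factorial : ℚ)) ≠ 0 := Nat.cast_ne_zero.2 (Nat.factorial_ne_zero _)
  have hval : ∀ j : Fin i → Fin i, polarDetPow i m' j
      = (((i * m').factorial : ℚ))⁻¹ *
        (if Function.Bijective j then (m'.factorial : ℚ) ^ i else 0) := by
    intro j
    rw [polarDetPow, coeff_formula]
    congr 1
    by_cases hj : Function.Bijective j
    · rw [if_pos hj, card_eq_of_bij j hj]; push_cast; ring
    · rw [if_neg hj, card_eq_zero_of_not_bij hm' j hj, Nat.cast_zero]
  refine ⟨fun j => ?_, ?_, ?_⟩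
  · rw [hval j]
    by_cases hj : Function.Bijective j
    · simp only [if_pos hj, iff_true_intro hj, iff_true]
      exact mul_ne_zero (inv_ne_zero hN)
        (pow_ne_zero _ (Nat.cast_ne_zero.2 (Nat.factorial_ne_zero _)))
    · rw [if_neg hj, mul_zero]
      exact ⟨fun h => absurd rfl h, fun h => absurd h hj⟩
  · rw [Finset.sum_congr rfl fun j _ => hval j, ← Finset.mul_sum, Finset.sum_ite,
      Finset.sum_const, Finset.sum_const_zero, add_zero, nsmul_eq_mul, card_bij_fun]
    rw [div_eq_inv_mul]
  · refine div_ne_zero (mul_ne_zero ?_ (pow_ne_zero _ ?_)) hN <;>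
      exact Nat.cast_ne_zero.2 (Nat.factorial_ne_zero _)
end

section
/- Let m be a positive even integer and E a complex vector space of dimension ℓ ≥ 1, with 1 ≤ i ≤ ℓ. Granting Howe's result that [S^j(S^m(W))]^{SL(W)} = 0 for 0 < j < dim W and is one-dimensional for j = dim W (m even), the smallest positive integer d such that V_E(dδ_i) occurs in the symmetric algebra S^•(S^m(E)) is d = m; moreover V_E(mδ_i) occurs with multiplicity exactly one, and it occurs in S^i(S^m(E)). -/
open Finset

/-- Coordinates model of `⊗^{jm} ℂ^n`, with tensor positions indexed by
`Fin j × Fin m` (`j` blocks of `m` factors): a tensor is a coefficient function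
`idx ↦ c idx` on multi-indices `idx : Fin j × Fin m → Fin n`.  A matrix
`g ∈ End(ℂ^n)` acts by `(g·c)(idx) = ∑_{jdx} (∏_t g_{idx t, jdx t}) c(jdx)`. -/
noncomputable def matAct {j m n : ℕ} (g : Matrix (Fin n) (Fin n) ℂ)
    (c : ((Fin j × Fin m) → Fin n) → ℂ) : ((Fin j × Fin m) → Fin n) → ℂ :=
  fun idx => ∑ jdx : (Fin j × Fin m) → Fin n,
    (∏ t : Fin j × Fin m, g (idx t) (jdx t)) * c jdx

/-- Upper triangular invertible matrices: the Borel subgroup `B`. -/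
def IsUT {n : ℕ} (g : Matrix (Fin n) (Fin n) ℂ) : Prop :=
  (∀ a b : Fin n, b < a → g a b = 0) ∧ IsUnit g.det

/-- Invariance under the subgroup `H = S_m^{×j} ⋊ S_j ⊂ S_{jm}` permuting the tensor
positions (permuting within each of the `j` blocks of size `m`, and permuting the
blocks): this cuts out `S^j(S^m(ℂ^n)) ⊂ ⊗^{jm} ℂ^n`. -/
def HInv {j m n : ℕ} (c : ((Fin j × Fin m) → Fin n) → ℂ) : Prop :=
  ∀ (π : Equiv.Perm (Fin j)) (ρ : Fin j → Equiv.Perm (Fin m))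
    (idx : (Fin j × Fin m) → Fin n),
    c (fun ab => idx (π ab.1, ρ ab.1 ab.2)) = c idx

/-- The character of `B` given by the weight `d·δ_i`: `b ↦ (∏_{k < i} b_{kk})^d`. -/
noncomputable def wtChar {n : ℕ} (i d : ℕ) (g : Matrix (Fin n) (Fin n) ℂ) : ℂ :=
  (∏ k ∈ Finset.univ.filter (fun k : Fin n => (k : ℕ) < i), g k k) ^ d

/-- Extension by zero: the inclusion `⊗^{jm}(E_i) ⊂ ⊗^{jm}(E)` for `E_i = ℂ^i ⊂ ℂ^n`,
in coordinates: extend a coefficient function on `Fin i`-valued multi-indices to all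
multi-indices, by zero off the `Fin i`-valued ones. -/
noncomputable def extTensor {j m n i : ℕ} (h : i ≤ n)
    (c : ((Fin j × Fin m) → Fin i) → ℂ) : ((Fin j × Fin m) → Fin n) → ℂ :=
  fun idx =>
    if hs : ∀ ab, ((idx ab : ℕ) < i) then c (fun ab => ⟨(idx ab : ℕ), hs ab⟩) else 0

/-- The `SL(ℂ^ν)`-invariants in `S^jj(S^m(ℂ^ν))` (coordinates model). -/
noncomputable def SLInvSet (m ν jj : ℕ) : Set (((Fin jj × Fin m) → Fin ν) → ℂ) :=
  {c | HInv c ∧ ∀ g : Matrix (Fin ν) (Fin ν) ℂ, g.det = 1 → matAct g c = c}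

/-- The space of `B`-highest weight vectors (together with `0`) of weight `d·δ_i` in
`S^j(S^m(ℂ^n))`: its dimension is the multiplicity of `V_E(dδ_i)` in `S^j(S^m(E))`. -/
noncomputable def EigSet (m n j d i : ℕ) : Set (((Fin j × Fin m) → Fin n) → ℂ) :=
  {c | HInv c ∧ ∀ g, IsUT g → matAct g c = wtChar i d g • c}

namespace HW

variable {j m ν : ℕ}

lemma matAct_one (c : ((Fin j × Fin m) → Fin ν) → ℂ) :
    matAct (1 : Matrix (Fin ν) (Fin ν) ℂ) c = c := by
  funext idx
  simp only [matAct, Matrix.one_apply]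
  rw [Finset.sum_eq_single idx]
  · simp
  · intro jdx _ hne
    obtain ⟨t, ht⟩ : ∃ t, idx t ≠ jdx t := by
      by_contra h; push_neg at h; exact hne (funext fun t => (h t).symm)
    rw [Finset.prod_eq_zero (Finset.mem_univ t) (by simp [ht]), zero_mul]
  · intro h; exact absurd (Finset.mem_univ idx) h

lemma matAct_mul (A B : Matrix (Fin ν) (Fin ν) ℂ) (c : ((Fin j × Fin m) → Fin ν) → ℂ) :
    matAct (A * B) c = matAct A (matAct B c) := by
  funext idx
  simp only [matAct, Matrix.mul_apply]
  have h1 : ∀ jdx : (Fin j × Fin m) → Fin ν,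
      (∏ t : Fin j × Fin m, ∑ k, A (idx t) k * B k (jdx t))
      = ∑ kdx : (Fin j × Fin m) → Fin ν, ∏ t, A (idx t) (kdx t) * B (kdx t) (jdx t) := by
    intro jdx
    have h := Finset.prod_univ_sum (fun _ : Fin j × Fin m => (univ : Finset (Fin ν)))
      (fun t k => A (idx t) k * B k (jdx t))
    rw [Fintype.piFinset_univ] at h
    exact h
  calc (∑ jdx : (Fin j × Fin m) → Fin ν,
        (∏ t : Fin j × Fin m, ∑ k, A (idx t) k * B k (jdx t)) * c jdx)
      = ∑ jdx : (Fin j × Fin m) → Fin ν, ∑ kdx : (Fin j × Fin m) → Fin ν,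
          (∏ t, A (idx t) (kdx t)) * ((∏ t, B (kdx t) (jdx t)) * c jdx) := by
        refine Finset.sum_congr rfl fun jdx _ => ?_
        rw [h1, Finset.sum_mul]
        refine Finset.sum_congr rfl fun kdx _ => ?_
        rw [Finset.prod_mul_distrib, mul_assoc]
    _ = ∑ kdx : (Fin j × Fin m) → Fin ν,
          (∏ t, A (idx t) (kdx t)) * ∑ jdx : (Fin j × Fin m) → Fin ν,
            (∏ t, B (kdx t) (jdx t)) * c jdx := by
        rw [Finset.sum_comm]
        exact Finset.sum_congr rfl fun kdx _ => (Finset.mul_sum _ _ _).symm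

lemma matAct_zero (g : Matrix (Fin ν) (Fin ν) ℂ) :
    matAct g (0 : ((Fin j × Fin m) → Fin ν) → ℂ) = 0 := by
  funext idx; simp [matAct]

lemma matAct_smul (g : Matrix (Fin ν) (Fin ν) ℂ) (a : ℂ) (c : ((Fin j × Fin m) → Fin ν) → ℂ) :
    matAct g (a • c) = a • matAct g c := by
  funext idx
  simp only [matAct, Pi.smul_apply, smul_eq_mul, Finset.mul_sum]
  exact Finset.sum_congr rfl fun jdx _ => by ring

lemma matAct_smulMatrix (g : Matrix (Fin ν) (Fin ν) ℂ) (a : ℂ)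
    (c : ((Fin j × Fin m) → Fin ν) → ℂ) :
    matAct (a • g) c = a ^ (j * m) • matAct g c := by
  funext idx
  simp only [matAct, Pi.smul_apply, smul_eq_mul, Finset.mul_sum]
  refine Finset.sum_congr rfl fun jdx _ => ?_
  have : (∏ t : Fin j × Fin m, (a • g) (idx t) (jdx t))
      = a ^ (j * m) * ∏ t : Fin j × Fin m, g (idx t) (jdx t) := by
    simp only [Matrix.smul_apply, smul_eq_mul]
    rw [Finset.prod_mul_distrib, Finset.prod_const]
    congr 2
    simp [Finset.card_univ]
  rw [this, mul_assoc]

lemma matAct_diagonal (D : Fin ν → ℂ) (c : ((Fin j × Fin m) → Fin ν) → ℂ)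
    (idx : (Fin j × Fin m) → Fin ν) :
    matAct (Matrix.diagonal D) c idx = (∏ t : Fin j × Fin m, D (idx t)) * c idx := by
  simp only [matAct, Matrix.diagonal_apply]
  rw [Finset.sum_eq_single idx]
  · simp
  · intro jdx _ hne
    obtain ⟨t, ht⟩ : ∃ t, idx t ≠ jdx t := by
      by_contra h; push_neg at h; exact hne (funext fun t => (h t).symm)
    rw [Finset.prod_eq_zero (Finset.mem_univ t) (by simp [ht]), zero_mul]
  · intro h; exact absurd (Finset.mem_univ idx) h


/-! ### counts, flips -/

def cnt (a : Fin ν) (idx : Fin j × Fin m → Fin ν) : ℕ :=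
  (univ.filter fun t => idx t = a).card

def ovr (idx : Fin j × Fin m → Fin ν) (S : Finset (Fin j × Fin m)) (b : Fin ν) :
    Fin j × Fin m → Fin ν := fun t => if t ∈ S then b else idx t

noncomputable def Rop (a b : Fin ν) (c : ((Fin j × Fin m) → Fin ν) → ℂ) :
    ((Fin j × Fin m) → Fin ν) → ℂ :=
  fun idx => ∑ t ∈ univ.filter (fun t => idx t = a), c (Function.update idx t b)

noncomputable def Fop (a b : Fin ν) (k : ℕ) (c : ((Fin j × Fin m) → Fin ν) → ℂ) :
    ((Fin j × Fin m) → Fin ν) → ℂ :=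
  fun idx => ∑ S ∈ Finset.powersetCard k (univ.filter fun t => idx t = a), c (ovr idx S b)

lemma cnt_le (a : Fin ν) (idx : Fin j × Fin m → Fin ν) : cnt a idx ≤ j * m := by
  have := Finset.card_filter_le (univ : Finset (Fin j × Fin m)) (fun t => idx t = a)
  simpa [cnt, Finset.card_univ] using this

lemma sum_cnt (idx : Fin j × Fin m → Fin ν) : ∑ k : Fin ν, cnt k idx = j * m := by
  have h := Finset.card_eq_sum_card_fiberwise
    (f := idx) (s := (univ : Finset (Fin j × Fin m))) (t := (univ : Finset (Fin ν)))
    (fun x _ => Finset.mem_univ (idx x))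
  simp only [Finset.card_univ, Fintype.card_prod, Fintype.card_fin] at h
  simp only [cnt]
  omega

lemma ovr_empty (idx : Fin j × Fin m → Fin ν) (b : Fin ν) : ovr idx ∅ b = idx := by
  funext t; simp [ovr]

lemma ovr_singleton (idx : Fin j × Fin m → Fin ν) (t : Fin j × Fin m) (b : Fin ν) :
    ovr idx {t} b = Function.update idx t b := by
  funext t'; simp [ovr, Function.update_apply, Finset.mem_singleton]

lemma ovr_update (idx : Fin j × Fin m → Fin ν) (t : Fin j × Fin m)
    (S : Finset (Fin j × Fin m)) (ht : t ∉ S) (b : Fin ν) :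
    ovr (Function.update idx t b) S b = ovr idx (insert t S) b := by
  funext t'
  by_cases h1 : t' ∈ S
  · simp [ovr, h1, Finset.mem_insert_of_mem h1]
  · by_cases h2 : t' = t
    · subst h2; simp [ovr, h1, Function.update_apply]
    · simp [ovr, h1, h2, Function.update_apply]

lemma filter_update_self (idx : Fin j × Fin m → Fin ν) (t : Fin j × Fin m) (v : Fin ν) :
    (univ.filter fun t' => Function.update idx t v t' = v)
      = insert t (univ.filter fun t' => idx t' = v) := by
  ext t'
  by_cases h : t' = t
  · subst h; simp [Function.update_apply]
  · simp [Function.update_apply, h]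

lemma filter_update_ne (idx : Fin j × Fin m → Fin ν) (t : Fin j × Fin m) {v w : Fin ν}
    (hvw : w ≠ v) :
    (univ.filter fun t' => Function.update idx t v t' = w)
      = (univ.filter fun t' => idx t' = w).erase t := by
  ext t'
  by_cases h : t' = t
  · subst h; simp [Function.update_apply, hvw.symm]
  · simp [Function.update_apply, h]

lemma Rop_zero (a b : Fin ν) : Rop a b (0 : ((Fin j × Fin m) → Fin ν) → ℂ) = 0 := by
  funext idx; simp [Rop]

lemma Rop_smul (a b : Fin ν) (r : ℂ) (c : ((Fin j × Fin m) → Fin ν) → ℂ) :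
    Rop a b (r • c) = r • Rop a b c := by
  funext idx; simp [Rop, Finset.mul_sum]


/-! ### transvection expansion -/

lemma matAct_transvection (a b : Fin ν) (hab : a ≠ b) (s : ℂ)
    (c : ((Fin j × Fin m) → Fin ν) → ℂ) (idx : (Fin j × Fin m) → Fin ν) :
    matAct (Matrix.transvection a b s) c idx
      = ∑ S ∈ (univ.filter fun t => idx t = a).powerset, s ^ S.card * c (ovr idx S b) := by
  have hent : ∀ x y : Fin ν, Matrix.transvection a b s x y
      = (if a = x ∧ b = y then s else 0) + (if x = y then 1 else 0) := by
    intro x y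
    simp only [Matrix.transvection, Matrix.add_apply, Matrix.one_apply,
      Matrix.single, Matrix.of_apply]
    rw [add_comm]
  have key : ∀ S : Finset (Fin j × Fin m),
      (∑ jdx : (Fin j × Fin m) → Fin ν,
        ((∏ t ∈ S, if a = idx t ∧ b = jdx t then s else 0)
          * ∏ t ∈ univ \ S, if idx t = jdx t then 1 else 0) * c jdx)
      = if S ⊆ univ.filter (fun t => idx t = a) then s ^ S.card * c (ovr idx S b) else 0 := by
    intro S
    rw [Finset.sum_eq_single (ovr idx S b)]
    · have h2 : (∏ t ∈ univ \ S, if idx t = ovr idx S b t then (1:ℂ) else 0) = 1 := by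
        apply Finset.prod_eq_one
        intro t ht
        have : t ∉ S := (Finset.mem_sdiff.mp ht).2
        simp [ovr, this]
      rw [h2, mul_one]
      by_cases hsub : S ⊆ univ.filter (fun t => idx t = a)
      · rw [if_pos hsub]
        have h3 : (∏ t ∈ S, if a = idx t ∧ b = ovr idx S b t then s else 0) = s ^ S.card := by
          rw [← Finset.prod_const]
          apply Finset.prod_congr rfl
          intro t ht
          have h4 : idx t = a := (Finset.mem_filter.mp (hsub ht)).2
          simp [ovr, ht, h4]
        rw [h3]
      · rw [if_neg hsub]
        obtain ⟨t, htS, hta⟩ : ∃ t ∈ S, idx t ≠ a := by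
          by_contra hcon; push_neg at hcon
          exact hsub fun t ht => Finset.mem_filter.mpr ⟨Finset.mem_univ t, hcon t ht⟩
        rw [Finset.prod_eq_zero htS (by
          rw [if_neg]; rintro ⟨h1, _⟩; exact hta h1.symm), zero_mul]
    · intro jdx _ hne
      obtain ⟨t, ht⟩ : ∃ t, jdx t ≠ ovr idx S b t := by
        by_contra hcon; push_neg at hcon
        exact hne (funext hcon)
      by_cases htS : t ∈ S
      · have : (∏ t ∈ S, if a = idx t ∧ b = jdx t then s else 0) = 0 := by
          apply Finset.prod_eq_zero htS
          have h5 : jdx t ≠ b := by simpa [ovr, htS] using ht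
          rw [if_neg]; rintro ⟨_, h2⟩; exact h5 h2.symm
        rw [this, zero_mul, zero_mul]
      · have : (∏ t' ∈ univ \ S, if idx t' = jdx t' then (1:ℂ) else 0) = 0 := by
          apply Finset.prod_eq_zero (Finset.mem_sdiff.mpr ⟨Finset.mem_univ t, htS⟩)
          have h5 : jdx t ≠ idx t := by simpa [ovr, htS] using ht
          rw [if_neg]; exact fun h => h5 h.symm
        rw [this, mul_zero, zero_mul]
    · intro h; exact absurd (Finset.mem_univ _) h
  calc matAct (Matrix.transvection a b s) c idx
      = ∑ jdx : (Fin j × Fin m) → Fin ν, ∑ S ∈ (univ : Finset (Fin j × Fin m)).powerset,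
          ((∏ t ∈ S, if a = idx t ∧ b = jdx t then s else 0)
            * ∏ t ∈ univ \ S, if idx t = jdx t then 1 else 0) * c jdx := by
        refine Finset.sum_congr rfl fun jdx _ => ?_
        rw [show (∏ t : Fin j × Fin m, Matrix.transvection a b s (idx t) (jdx t))
            = ∑ S ∈ (univ : Finset (Fin j × Fin m)).powerset,
              (∏ t ∈ S, if a = idx t ∧ b = jdx t then s else 0)
                * ∏ t ∈ univ \ S, if idx t = jdx t then 1 else 0 by
          rw [← Finset.prod_add]
          exact Finset.prod_congr rfl fun t _ => hent (idx t) (jdx t)]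
        rw [Finset.sum_mul]
    _ = ∑ S ∈ (univ : Finset (Fin j × Fin m)).powerset,
          ∑ jdx : (Fin j × Fin m) → Fin ν,
          ((∏ t ∈ S, if a = idx t ∧ b = jdx t then s else 0)
            * ∏ t ∈ univ \ S, if idx t = jdx t then 1 else 0) * c jdx := Finset.sum_comm
    _ = ∑ S ∈ (univ : Finset (Fin j × Fin m)).powerset,
          (if S ⊆ univ.filter (fun t => idx t = a) then s ^ S.card * c (ovr idx S b) else 0) :=
        Finset.sum_congr rfl fun S _ => key S
    _ = ∑ S ∈ (univ.filter fun t => idx t = a).powerset, s ^ S.card * c (ovr idx S b) := by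
        rw [← Finset.sum_filter]
        congr 1
        ext S
        simp only [Finset.mem_filter, Finset.mem_powerset]
        exact ⟨fun h => h.2, fun h => ⟨Finset.subset_univ S, h⟩⟩

lemma matAct_transvection' (a b : Fin ν) (hab : a ≠ b) (s : ℂ)
    (c : ((Fin j × Fin m) → Fin ν) → ℂ) (idx : (Fin j × Fin m) → Fin ν) :
    matAct (Matrix.transvection a b s) c idx
      = ∑ k ∈ Finset.range (cnt a idx + 1), s ^ k * Fop a b k c idx := by
  rw [matAct_transvection a b hab, Finset.powerset_card_disjiUnion]
  refine (Finset.sum_disjiUnion _ _ _).trans ?_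
  refine Finset.sum_congr rfl fun k _ => ?_
  rw [Fop, Finset.mul_sum]
  refine Finset.sum_congr rfl fun S hS => ?_
  rw [(Finset.mem_powersetCard.mp hS).2]

lemma Fop_zero_eq (a b : Fin ν) (c : ((Fin j × Fin m) → Fin ν) → ℂ) : Fop a b 0 c = c := by
  funext idx
  rw [Fop, Finset.powersetCard_zero, Finset.sum_singleton, ovr_empty]

lemma Fop_large (a b : Fin ν) (k : ℕ) (c : ((Fin j × Fin m) → Fin ν) → ℂ)
    (idx : (Fin j × Fin m) → Fin ν) (h : cnt a idx < k) : Fop a b k c idx = 0 := by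
  rw [Fop, Finset.powersetCard_eq_empty.mpr h, Finset.sum_empty]

lemma coeffs_zero {N : ℕ} (f : ℕ → ℂ) (h : ∀ s : ℂ, ∑ k ∈ Finset.range N, s ^ k * f k = 0) :
    ∀ k, k < N → f k = 0 := by
  intro k hk
  set p : Polynomial ℂ := ∑ l ∈ Finset.range N, Polynomial.C (f l) * Polynomial.X ^ l with hp
  have hp0 : p = 0 := by
    apply Polynomial.zero_of_eval_zero
    intro s
    rw [hp, Polynomial.eval_finset_sum]
    rw [← h s]
    refine Finset.sum_congr rfl fun l _ => ?_
    rw [Polynomial.eval_mul, Polynomial.eval_C, Polynomial.eval_pow, Polynomial.eval_X, mul_comm]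
  have hco := congrArg (fun q => Polynomial.coeff q k) hp0
  simp only [hp, Polynomial.finset_sum_coeff, Polynomial.coeff_C_mul, Polynomial.coeff_X_pow,
    Polynomial.coeff_zero, mul_ite, mul_one, mul_zero] at hco
  rwa [Finset.sum_ite_eq (Finset.range N) k f, if_pos (Finset.mem_range.mpr hk)] at hco


lemma Fop_eq_zero_of_fixed (a b : Fin ν) (hab : a ≠ b) (c : ((Fin j × Fin m) → Fin ν) → ℂ)
    (h : ∀ s : ℂ, matAct (Matrix.transvection a b s) c = c) :
    ∀ k, 1 ≤ k → Fop a b k c = 0 := by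
  intro k hk
  funext idx
  by_cases hbig : cnt a idx < k
  · exact Fop_large a b k c idx hbig
  have h2 : ∀ s : ℂ, ∑ l ∈ Finset.range (cnt a idx + 1),
      s ^ l * (if l = 0 then 0 else Fop a b l c idx) = 0 := by
    intro s
    have h3 := congrFun (h s) idx
    rw [matAct_transvection' a b hab, Finset.sum_range_succ'] at h3
    simp only [Fop_zero_eq, pow_zero, one_mul] at h3
    have h3' : ∑ l ∈ Finset.range (cnt a idx), s ^ (l+1) * Fop a b (l+1) c idx = 0 := by
      have h6 := congrArg (fun z => z - c idx) h3
      simpa using h6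
    rw [Finset.sum_range_succ']
    simp only [Nat.succ_ne_zero, if_false, pow_zero, one_mul, if_pos, mul_zero, add_zero,
      reduceIte]
    exact h3'
  have h5 := coeffs_zero _ h2 k (by omega)
  rw [if_neg (by omega)] at h5
  exact h5

lemma fixed_of_Fop_zero (a b : Fin ν) (hab : a ≠ b) (c : ((Fin j × Fin m) → Fin ν) → ℂ)
    (h : ∀ k, 1 ≤ k → Fop a b k c = 0) :
    ∀ s : ℂ, matAct (Matrix.transvection a b s) c = c := by
  intro s
  funext idx
  rw [matAct_transvection' a b hab, Finset.sum_range_succ']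
  simp only [Fop_zero_eq, pow_zero, one_mul]
  have h4 : ∀ l ∈ Finset.range (cnt a idx), s ^ (l+1) * Fop a b (l+1) c idx = 0 := by
    intro l _
    rw [congrFun (h (l+1) (by omega)) idx]
    simp
  rw [Finset.sum_congr rfl h4, Finset.sum_const_zero, zero_add]

lemma Rop_eq_Fop_one (a b : Fin ν) (c : ((Fin j × Fin m) → Fin ν) → ℂ) :
    Rop a b c = Fop a b 1 c := by
  funext idx
  rw [Fop, Finset.powersetCard_one, Finset.sum_map]
  refine Finset.sum_congr rfl fun t _ => ?_
  rw [show ((⟨_, Finset.singleton_injective⟩ : _ ↪ Finset (Fin j × Fin m)) t) = {t} from rfl,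
    ovr_singleton]

lemma Rop_Fop_succ (a b : Fin ν) (hab : a ≠ b) (k : ℕ) (c : ((Fin j × Fin m) → Fin ν) → ℂ)
    (idx : (Fin j × Fin m) → Fin ν) :
    Rop a b (Fop a b k c) idx = ((k : ℂ) + 1) * Fop a b (k+1) c idx := by
  have hA : ∀ t, idx t = a →
      (univ.filter fun t' => Function.update idx t b t' = a)
        = (univ.filter fun t' => idx t' = a).erase t := by
    intro t _
    exact filter_update_ne idx t hab
  calc Rop a b (Fop a b k c) idx
      = ∑ t ∈ univ.filter (fun t => idx t = a),
          ∑ S ∈ Finset.powersetCard k ((univ.filter fun t' => idx t' = a).erase t),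
            c (ovr idx (insert t S) b) := by
        refine Finset.sum_congr rfl fun t ht => ?_
        rw [Fop, hA t (Finset.mem_filter.mp ht).2]
        refine Finset.sum_congr rfl fun S hS => ?_
        have htS : t ∉ S := fun hc =>
          (Finset.notMem_erase t _) ((Finset.mem_powersetCard.mp hS).1 hc)
        rw [ovr_update idx t S htS b]
    _ = ∑ x ∈ (univ.filter fun t => idx t = a).sigma
          (fun t => Finset.powersetCard k ((univ.filter fun t' => idx t' = a).erase t)),
          c (ovr idx (insert x.1 x.2) b) := by rw [Finset.sum_sigma]
    _ = ∑ y ∈ (Finset.powersetCard (k+1) (univ.filter fun t => idx t = a)).sigma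
          (fun S' => S'), c (ovr idx y.1 b) := by
        refine Finset.sum_nbij' (fun x => ⟨insert x.1 x.2, x.1⟩) (fun y => ⟨y.2, y.1.erase y.2⟩)
          ?_ ?_ ?_ ?_ ?_
        · intro x hx
          rw [Finset.mem_sigma] at hx
          obtain ⟨hx1, hx2⟩ := hx
          rw [Finset.mem_powersetCard] at hx2
          have htS : x.1 ∉ x.2 := fun hc => (Finset.notMem_erase x.1 _) (hx2.1 hc)
          rw [Finset.mem_sigma, Finset.mem_powersetCard]
          refine ⟨⟨Finset.insert_subset (Finset.mem_filter.mp hx1 |>.1 |> fun _ => hx1)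
            (hx2.1.trans (Finset.erase_subset _ _)), ?_⟩, Finset.mem_insert_self _ _⟩
          rw [Finset.card_insert_of_notMem htS, hx2.2]
        · intro y hy
          rw [Finset.mem_sigma] at hy
          obtain ⟨hy1, hy2⟩ := hy
          rw [Finset.mem_powersetCard] at hy1
          rw [Finset.mem_sigma, Finset.mem_powersetCard]
          refine ⟨hy1.1 hy2, Finset.erase_subset_erase _ hy1.1, ?_⟩
          rw [Finset.card_erase_of_mem hy2, hy1.2]
          omega
        · rintro ⟨x1, x2⟩ hx
          rw [Finset.mem_sigma] at hx
          obtain ⟨_, hx2⟩ := hx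
          rw [Finset.mem_powersetCard] at hx2
          have htS : x1 ∉ x2 := fun hc => (Finset.notMem_erase x1 _) (hx2.1 hc)
          simp [Finset.erase_insert htS]
        · rintro ⟨y1, y2⟩ hy
          rw [Finset.mem_sigma] at hy
          simp [Finset.insert_erase hy.2]
        · intro x _; rfl
    _ = ((k : ℂ) + 1) * Fop a b (k+1) c idx := by
        rw [Finset.sum_sigma, Fop, Finset.mul_sum]
        refine Finset.sum_congr rfl fun S hS => ?_
        show (∑ _s ∈ S, c (ovr idx S b)) = ((k:ℂ)+1) * c (ovr idx S b)
        rw [Finset.sum_const, (Finset.mem_powersetCard.mp hS).2, nsmul_eq_mul]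
        push_cast
        ring

lemma Fop_all_zero (a b : Fin ν) (hab : a ≠ b) (c : ((Fin j × Fin m) → Fin ν) → ℂ)
    (h1 : Rop a b c = 0) : ∀ k, 1 ≤ k → Fop a b k c = 0 := by
  have main : ∀ k, Fop a b (k+1) c = 0 := by
    intro k
    induction k with
    | zero => rw [← Rop_eq_Fop_one]; exact h1
    | succ k ih =>
      funext idx
      have h2 := Rop_Fop_succ a b hab (k+1) c idx
      rw [ih, Rop_zero] at h2
      have h3 : (((k+1:ℕ):ℂ)+1) ≠ 0 := by
        exact_mod_cast Nat.succ_ne_zero (k+1)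
      have h5 : (((k+1:ℕ):ℂ)+1) * Fop a b (k+1+1) c idx = 0 := by
        rw [← h2]; simp
      rw [Pi.zero_apply]
      exact (mul_eq_zero.mp h5).resolve_left h3
  intro k hk
  obtain ⟨k', rfl⟩ : ∃ k', k = k' + 1 := ⟨k - 1, by omega⟩
  exact main k'


/-! ### sl2 -/

/-- Commutator identity `[e,f] = h` in coordinates. -/
lemma comm_ef (a b : Fin ν) (hab : a ≠ b) (c : ((Fin j × Fin m) → Fin ν) → ℂ)
    (idx : (Fin j × Fin m) → Fin ν) :
    Rop a b (Rop b a c) idx + (cnt b idx : ℂ) * c idx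
      = Rop b a (Rop a b c) idx + (cnt a idx : ℂ) * c idx := by
  have expand : ∀ (x y : Fin ν), x ≠ y →
      Rop x y (Rop y x c) idx = (cnt x idx : ℂ) * c idx
        + ∑ t ∈ univ.filter (fun t => idx t = x), ∑ t' ∈ univ.filter (fun t' => idx t' = y),
            c (Function.update (Function.update idx t y) t' x) := by
    intro x y hxy
    rw [Rop]
    have step : ∀ t ∈ univ.filter (fun t => idx t = x),
        Rop y x c (Function.update idx t y)
          = c idx + ∑ t' ∈ univ.filter (fun t' => idx t' = y),
              c (Function.update (Function.update idx t y) t' x) := by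
      intro t ht
      have htx : idx t = x := (Finset.mem_filter.mp ht).2
      rw [Rop, filter_update_self idx t y, Finset.sum_insert (by
        simp only [Finset.mem_filter, Finset.mem_univ, true_and]
        rw [htx]; exact hxy)]
      congr 1
      rw [Function.update_idem]
      rw [show x = idx t from htx.symm, Function.update_eq_self]
    rw [Finset.sum_congr rfl step, Finset.sum_add_distrib, Finset.sum_const, cnt,
      nsmul_eq_mul]
  rw [expand a b hab, expand b a (Ne.symm hab)]
  have cross : (∑ t ∈ univ.filter (fun t => idx t = a),
        ∑ t' ∈ univ.filter (fun t' => idx t' = b),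
          c (Function.update (Function.update idx t b) t' a))
      = ∑ t ∈ univ.filter (fun t => idx t = b),
        ∑ t' ∈ univ.filter (fun t' => idx t' = a),
          c (Function.update (Function.update idx t a) t' b) := by
    rw [Finset.sum_comm]
    refine Finset.sum_congr rfl fun t' ht' => Finset.sum_congr rfl fun t ht => ?_
    have h1 : idx t = a := (Finset.mem_filter.mp ht).2
    have h2 : idx t' = b := (Finset.mem_filter.mp ht').2
    have hne : t ≠ t' := fun hc => hab (h1 ▸ hc ▸ h2)
    rw [Function.update_comm hne]
  rw [cross]
  ring

/-- `[h, f]`-type identity: `f (H c) = H (f c) + 2 f c`, where `f = Rop b a`. -/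
lemma comm_hf (a b : Fin ν) (hab : a ≠ b) (c : ((Fin j × Fin m) → Fin ν) → ℂ)
    (idx : (Fin j × Fin m) → Fin ν) :
    Rop b a (fun jdx => ((cnt a jdx : ℂ) - cnt b jdx) * c jdx) idx
      = ((cnt a idx : ℂ) - cnt b idx) * Rop b a c idx + 2 * Rop b a c idx := by
  rw [Rop, Rop]
  have step : ∀ t ∈ univ.filter (fun t => idx t = b),
      ((cnt a (Function.update idx t a) : ℂ) - cnt b (Function.update idx t a))
          * c (Function.update idx t a)
        = ((cnt a idx : ℂ) - cnt b idx + 2) * c (Function.update idx t a) := by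
    intro t ht
    have htb : idx t = b := (Finset.mem_filter.mp ht).2
    have hca : cnt a (Function.update idx t a) = cnt a idx + 1 := by
      rw [cnt, cnt, filter_update_self idx t a, Finset.card_insert_of_notMem (by
        simp only [Finset.mem_filter, Finset.mem_univ, true_and]
        rw [htb]; exact Ne.symm hab)]
    have hcb : cnt b (Function.update idx t a) = cnt b idx - 1 ∧ 1 ≤ cnt b idx := by
      constructor
      · rw [cnt, cnt, filter_update_ne idx t (Ne.symm hab), Finset.card_erase_of_mem (by
          simp only [Finset.mem_filter, Finset.mem_univ, true_and]; exact htb)]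
      · rw [cnt]
        have : t ∈ univ.filter (fun t' => idx t' = b) := by
          simp only [Finset.mem_filter, Finset.mem_univ, true_and]; exact htb
        exact Finset.card_pos.mpr ⟨t, this⟩
    rw [hca, hcb.1]
    have : ((cnt b idx - 1 : ℕ) : ℂ) = (cnt b idx : ℂ) - 1 := by
      have := hcb.2; push_cast [this]; ring
    rw [this]
    push_cast
    ring
  rw [Finset.sum_congr rfl step, ← Finset.mul_sum]
  ring


lemma f_iter_vanish (a b : Fin ν) (hab : a ≠ b) :
    ∀ (K : ℕ) (X : ((Fin j × Fin m) → Fin ν) → ℂ) (idx : (Fin j × Fin m) → Fin ν),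
      cnt b idx < K → (Rop b a)^[K] X idx = 0 := by
  intro K
  induction K with
  | zero => intro X idx h; omega
  | succ K ih =>
    intro X idx h
    rw [Function.iterate_succ_apply', Rop]
    apply Finset.sum_eq_zero
    intro t ht
    have htb : idx t = b := (Finset.mem_filter.mp ht).2
    apply ih
    have h1 : cnt b (Function.update idx t a) = cnt b idx - 1 := by
      rw [cnt, cnt, filter_update_ne idx t (Ne.symm hab), Finset.card_erase_of_mem (by
        simp only [Finset.mem_filter, Finset.mem_univ, true_and]; exact htb)]
    have h2 : 1 ≤ cnt b idx := Finset.card_pos.mpr ⟨t, ht⟩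
    omega

lemma sl2_flip (a b : Fin ν) (hab : a ≠ b) (c : ((Fin j × Fin m) → Fin ν) → ℂ)
    (hbal : ∀ idx, ((cnt a idx : ℂ) - cnt b idx) * c idx = 0)
    (he : Rop a b c = 0) : Rop b a c = 0 := by
  set w : ((Fin j × Fin m) → Fin ν) → ℂ := Rop b a c with hw
  have hHc : (fun jdx => ((cnt a jdx : ℂ) - cnt b jdx) * c jdx)
      = (0 : ((Fin j × Fin m) → Fin ν) → ℂ) := funext fun idx => hbal idx
  have hew : Rop a b w = 0 := by
    funext idx
    have hcomm := comm_ef a b hab c idx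
    rw [he, Rop_zero, Pi.zero_apply] at hcomm
    have : Rop a b w idx = ((cnt a idx : ℂ) - cnt b idx) * c idx := by
      rw [hw]; linear_combination hcomm
    rw [this, hbal idx, Pi.zero_apply]
  have hHw : ∀ idx, ((cnt a idx : ℂ) - cnt b idx) * w idx = -2 * w idx := by
    intro idx
    have hcomm := comm_hf a b hab c idx
    rw [hHc, Rop_zero, Pi.zero_apply] at hcomm
    rw [hw]; linear_combination -hcomm
  set u : ℕ → ((Fin j × Fin m) → Fin ν) → ℂ := fun k => (Rop b a)^[k] w with hu
  have hu0 : u 0 = w := rfl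
  have hus : ∀ k, u (k+1) = Rop b a (u k) := fun k => Function.iterate_succ_apply' _ _ _
  have claimH : ∀ k idx, ((cnt a idx : ℂ) - cnt b idx) * u k idx
      = (-2 - 2*(k:ℂ)) * u k idx := by
    intro k
    induction k with
    | zero => intro idx; rw [hu0]; push_cast; simpa using hHw idx
    | succ k ih =>
      intro idx
      have hcomm := comm_hf a b hab (u k) idx
      have hfun : (fun jdx => ((cnt a jdx : ℂ) - cnt b jdx) * u k jdx)
          = (-2 - 2*(k:ℂ)) • u k := funext fun jdx => by
        rw [ih jdx]; rfl
      rw [hfun, Rop_smul] at hcomm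
      rw [hus k] at *
      have : ((-2 : ℂ) - 2*k) • Rop b a (u k) = fun idx => (-2 - 2*(k:ℂ)) * Rop b a (u k) idx :=
        rfl
      rw [this] at hcomm
      push_cast
      linear_combination -hcomm
  have claimE : ∀ k idx, Rop a b (u (k+1)) idx
      = (-((k:ℂ)+1)*((k:ℂ)+2)) * u k idx := by
    intro k
    induction k with
    | zero =>
      intro idx
      have hcomm := comm_ef a b hab w idx
      rw [hew, Rop_zero, Pi.zero_apply] at hcomm
      have h2 : Rop a b (Rop b a w) idx = ((cnt a idx : ℂ) - cnt b idx) * w idx := by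
        linear_combination hcomm
      rw [hus 0, hu0, h2, hHw idx]
      push_cast
      ring
    | succ k ih =>
      intro idx
      have hcomm := comm_ef a b hab (u (k+1)) idx
      have hfun : Rop a b (u (k+1)) = (-((k:ℂ)+1)*((k:ℂ)+2)) • u k :=
        funext fun jdx => by rw [ih jdx]; rfl
      rw [hfun, Rop_smul] at hcomm
      have hsm : ((-((k:ℂ)+1)*((k:ℂ)+2)) • Rop b a (u k)) idx
          = (-((k:ℂ)+1)*((k:ℂ)+2)) * u (k+1) idx := by
        rw [← hus k]; rfl
      rw [hsm] at hcomm
      have hH := claimH (k+1) idx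
      rw [hus (k+1)]
      push_cast at hH ⊢
      linear_combination hcomm + hH
  have claimNil : u (j*m+1) = 0 := by
    funext idx
    exact f_iter_vanish a b hab (j*m+1) w idx (by have := cnt_le b idx; omega)
  have claimDown : ∀ k, u (k+1) = 0 → u k = 0 := by
    intro k hk
    funext idx
    have hE := claimE k idx
    rw [hk, Rop_zero, Pi.zero_apply] at hE
    have hcoef : (-((k:ℂ)+1)*((k:ℂ)+2)) ≠ 0 := by
      apply mul_ne_zero
      · apply neg_ne_zero.mpr
        exact_mod_cast Nat.succ_ne_zero k
      · exact_mod_cast Nat.succ_ne_zero (k+1)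
    rw [Pi.zero_apply]
    exact (mul_eq_zero.mp hE.symm).resolve_left hcoef
  have hall : ∀ r, u (j*m+1 - r) = 0 := by
    intro r
    induction r with
    | zero => simpa using claimNil
    | succ r ih =>
      by_cases hr : r < j*m+1
      · have heq : j*m+1 - r = (j*m+1 - (r+1)) + 1 := by omega
        rw [heq] at ih
        exact claimDown _ ih
      · have heq : j*m+1 - (r+1) = j*m+1 - r := by omega
        rw [heq]; exact ih
  have hfin := hall (j*m+1)
  simp only [Nat.sub_self] at hfin
  rw [← hu0, hfin]


/-! ### restriction / extension -/

variable {n i : ℕ}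

noncomputable def resT (h : i ≤ n) (c : ((Fin j × Fin m) → Fin n) → ℂ) :
    ((Fin j × Fin m) → Fin i) → ℂ :=
  fun idx => c (fun t => Fin.castLE h (idx t))

lemma res_ext (h : i ≤ n) (c' : ((Fin j × Fin m) → Fin i) → ℂ) :
    resT h (extTensor h c') = c' := by
  funext idx
  simp only [resT, extTensor]
  rw [dif_pos (show ∀ ab : Fin j × Fin m, ((Fin.castLE h (idx ab) : Fin n) : ℕ) < i from
    fun ab => (idx ab).2)]
  rfl

lemma res_zero (h : i ≤ n) : resT (j := j) (m := m) h 0 = 0 := rfl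

lemma ext_eq_self (h : i ≤ n) (c : ((Fin j × Fin m) → Fin n) → ℂ)
    (hsupp : ∀ idx, c idx ≠ 0 → ∀ t, ((idx t : ℕ) < i)) :
    extTensor h (resT h c) = c := by
  funext idx
  simp only [extTensor, resT]
  by_cases hlt : ∀ t : Fin j × Fin m, ((idx t : ℕ) < i)
  · rw [dif_pos hlt]
    rfl
  · rw [dif_neg hlt]
    by_cases hc : c idx = 0
    · rw [hc]
    · exact absurd (hsupp idx hc) hlt

lemma ext_smul (h : i ≤ n) (r : ℂ) (c' : ((Fin j × Fin m) → Fin i) → ℂ) :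
    extTensor h (r • c') = r • extTensor h c' := by
  funext idx
  simp only [extTensor, Pi.smul_apply, smul_eq_mul]
  by_cases hlt : ∀ t : Fin j × Fin m, ((idx t : ℕ) < i)
  · rw [dif_pos hlt, dif_pos hlt]
  · rw [dif_neg hlt, dif_neg hlt]; simp

lemma ext_zero (h : i ≤ n) : extTensor (j := j) (m := m) h 0 = 0 := by
  funext idx
  simp only [extTensor]
  by_cases hlt : ∀ t : Fin j × Fin m, ((idx t : ℕ) < i)
  · rw [dif_pos hlt]; rfl
  · rw [dif_neg hlt]; rfl

lemma ext_ne_zero (h : i ≤ n) (c' : ((Fin j × Fin m) → Fin i) → ℂ) (hne : c' ≠ 0) :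
    extTensor h c' ≠ 0 := fun hc => hne (by rw [← res_ext h c', hc, res_zero])

lemma cnt_res (h : i ≤ n) (k : Fin i) (idx' : (Fin j × Fin m) → Fin i) :
    cnt (Fin.castLE h k) (fun t => Fin.castLE h (idx' t)) = cnt k idx' := by
  rw [cnt, cnt]
  congr 1
  apply Finset.filter_congr
  intro t _
  exact Fin.castLE_inj

lemma filter_lt_eq_map (h : i ≤ n) :
    Finset.univ.filter (fun k : Fin n => (k : ℕ) < i)
      = Finset.univ.map ⟨Fin.castLE h, Fin.castLE_injective h⟩ := by
  ext k
  simp only [Finset.mem_filter, Finset.mem_univ, true_and, Finset.mem_map,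
    Function.Embedding.coeFn_mk]
  constructor
  · intro hk; exact ⟨⟨(k : ℕ), hk⟩, Fin.ext rfl⟩
  · rintro ⟨k', rfl⟩; exact k'.2

lemma card_filter_lt (h : i ≤ n) :
    (Finset.univ.filter (fun k : Fin n => (k : ℕ) < i)).card = i := by
  rw [filter_lt_eq_map h, Finset.card_map, Finset.card_univ, Fintype.card_fin]

lemma matAct_ext (h : i ≤ n) (g : Matrix (Fin n) (Fin n) ℂ)
    (hg0 : ∀ x y : Fin n, (y : ℕ) < i → ¬((x : ℕ) < i) → g x y = 0)
    (c' : ((Fin j × Fin m) → Fin i) → ℂ) :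
    matAct g (extTensor h c')
      = extTensor h
          (matAct (Matrix.of fun x y : Fin i => g (Fin.castLE h x) (Fin.castLE h y)) c') := by
  funext idx
  by_cases hlt : ∀ t, ((idx t : ℕ) < i)
  · have hR : extTensor h
        (matAct (Matrix.of fun x y : Fin i => g (Fin.castLE h x) (Fin.castLE h y)) c') idx
        = matAct (Matrix.of fun x y : Fin i => g (Fin.castLE h x) (Fin.castLE h y)) c'
            (fun t => ⟨(idx t : ℕ), hlt t⟩) := by
      simp only [extTensor]
      rw [dif_pos hlt]
    rw [hR, matAct, matAct]
    rw [← Finset.sum_filter_add_sum_filter_not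
      (univ : Finset ((Fin j × Fin m) → Fin n)) (fun jdx => ∀ t, ((jdx t : ℕ) < i))]
    have hzero : (∑ jdx ∈ univ.filter (fun jdx : (Fin j × Fin m) → Fin n =>
        ¬ ∀ t, ((jdx t : ℕ) < i)),
        (∏ t, g (idx t) (jdx t)) * extTensor h c' jdx) = 0 := by
      apply Finset.sum_eq_zero
      intro jdx hj
      have : extTensor h c' jdx = 0 := by
        simp only [extTensor]
        rw [dif_neg (Finset.mem_filter.mp hj).2]
      rw [this, mul_zero]
    rw [hzero, add_zero]
    refine Finset.sum_bij' (i := fun jdx hj => fun t => (⟨(jdx t : ℕ),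
        (Finset.mem_filter.mp hj).2 t⟩ : Fin i))
      (j := fun jdx' _ => fun t => Fin.castLE h (jdx' t)) ?_ ?_ ?_ ?_ ?_
    · intro jdx hj; exact Finset.mem_univ _
    · intro jdx' _
      exact Finset.mem_filter.mpr ⟨Finset.mem_univ _, fun t => (jdx' t).2⟩
    · intro jdx hj; funext t; exact Fin.ext rfl
    · intro jdx' _; funext t; exact Fin.ext rfl
    · intro jdx hj
      have h1 : extTensor h c' jdx
          = c' (fun t => ⟨(jdx t : ℕ), (Finset.mem_filter.mp hj).2 t⟩) := by
        simp only [extTensor]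
        rw [dif_pos (Finset.mem_filter.mp hj).2]
      rw [h1]
      rfl
  · have hR : extTensor h
        (matAct (Matrix.of fun x y : Fin i => g (Fin.castLE h x) (Fin.castLE h y)) c') idx
        = 0 := by
      simp only [extTensor]
      rw [dif_neg hlt]
    rw [hR]
    obtain ⟨t0, ht0⟩ : ∃ t, ¬ ((idx t : ℕ) < i) := by
      by_contra hcon; push_neg at hcon; exact hlt fun t => hcon t
    rw [matAct]
    apply Finset.sum_eq_zero
    intro jdx _
    by_cases hj : ∀ t, ((jdx t : ℕ) < i)
    · rw [Finset.prod_eq_zero (Finset.mem_univ t0) (hg0 _ _ (hj t0) ht0), zero_mul]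
    · have : extTensor h c' jdx = 0 := by
        simp only [extTensor]
        rw [dif_neg hj]
      rw [this, mul_zero]


/-! ### support of highest weight vectors -/

lemma prod_count (D : Fin ν → ℂ) (idx : (Fin j × Fin m) → Fin ν) :
    (∏ t : Fin j × Fin m, D (idx t)) = ∏ k : Fin ν, D k ^ cnt k idx := by
  rw [← Finset.prod_fiberwise_of_maps_to (g := idx) (fun t _ => Finset.mem_univ (idx t))
    (fun t => D (idx t))]
  refine Finset.prod_congr rfl fun k _ => ?_
  rw [cnt, ← Finset.prod_const]
  exact Finset.prod_congr rfl fun t ht => by rw [(Finset.mem_filter.mp ht).2]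

lemma eig_cnt {d : ℕ} (c : ((Fin j × Fin m) → Fin n) → ℂ)
    (hc : c ∈ EigSet m n j d i) (idx : (Fin j × Fin m) → Fin n)
    (hne : c idx ≠ 0) (k : Fin n) :
    cnt k idx = if (k : ℕ) < i then d else 0 := by
  set D : Fin n → ℂ := fun k' => if k' = k then 2 else 1 with hD
  have hD0 : ∀ k', D k' ≠ 0 := by
    intro k'; rw [hD]; dsimp only; split <;> norm_num
  have hUT : IsUT (Matrix.diagonal D) := by
    constructor
    · intro a b hba
      exact Matrix.diagonal_apply_ne D (ne_of_gt hba)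
    · rw [Matrix.det_diagonal]
      exact isUnit_iff_ne_zero.mpr (Finset.prod_ne_zero_iff.mpr fun k' _ => hD0 k')
  have heq := congrFun (hc.2 (Matrix.diagonal D) hUT) idx
  rw [matAct_diagonal, prod_count] at heq
  have hL : (∏ k' : Fin n, D k' ^ cnt k' idx) = 2 ^ cnt k idx := by
    rw [Finset.prod_eq_single k (fun k' _ hk' => by rw [hD]; dsimp only; rw [if_neg hk', one_pow])
      (fun h => absurd (Finset.mem_univ k) h)]
    rw [hD]; dsimp only; rw [if_pos rfl]
  have hwt : wtChar i d (Matrix.diagonal D) = (if (k : ℕ) < i then 2 else 1) ^ d := by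
    rw [wtChar]
    congr 1
    have hdiag : ∀ k' ∈ Finset.univ.filter (fun k' : Fin n => (k' : ℕ) < i),
        Matrix.diagonal D k' k' = if k' = k then 2 else 1 := by
      intro k' _; rw [Matrix.diagonal_apply_eq, hD]
    rw [Finset.prod_congr rfl hdiag, Finset.prod_ite_eq' (Finset.univ.filter
      (fun k' : Fin n => (k' : ℕ) < i)) k (fun _ => (2:ℂ))]
    simp only [Finset.mem_filter, Finset.mem_univ, true_and]
  rw [hL, hwt, Pi.smul_apply, smul_eq_mul] at heq
  have hcc := mul_right_cancel₀ hne heq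
  by_cases hki : (k : ℕ) < i
  · rw [if_pos hki] at hcc ⊢
    have : ((2 ^ cnt k idx : ℕ) : ℂ) = ((2 ^ d : ℕ) : ℂ) := by push_cast; exact hcc
    exact Nat.pow_right_injective (le_refl 2) (Nat.cast_injective this)
  · rw [if_neg hki] at hcc ⊢
    rw [one_pow] at hcc
    have : ((2 ^ cnt k idx : ℕ) : ℂ) = ((2 ^ 0 : ℕ) : ℂ) := by push_cast; rw [hcc]
    exact Nat.pow_right_injective (le_refl 2) (Nat.cast_injective this)

lemma eig_valsupp {d : ℕ} (c : ((Fin j × Fin m) → Fin n) → ℂ)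
    (hc : c ∈ EigSet m n j d i) (idx : (Fin j × Fin m) → Fin n)
    (hne : c idx ≠ 0) : ∀ t, ((idx t : ℕ) < i) := by
  intro t
  by_contra hcon
  have h1 := eig_cnt c hc idx hne (idx t)
  rw [if_neg hcon] at h1
  have h2 : t ∈ Finset.univ.filter (fun t' => idx t' = idx t) := by
    simp only [Finset.mem_filter, Finset.mem_univ, true_and]
  have := Finset.card_pos.mpr ⟨t, h2⟩
  rw [cnt] at h1
  omega

lemma eig_dim {d : ℕ} (c : ((Fin j × Fin m) → Fin n) → ℂ)
    (hc : c ∈ EigSet m n j d i) (hne : c ≠ 0) (hin : i ≤ n) : j * m = i * d := by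
  obtain ⟨idx, hidx⟩ := Function.ne_iff.mp hne
  rw [Pi.zero_apply] at hidx
  have h1 := sum_cnt idx
  rw [Finset.sum_congr rfl (fun k _ => eig_cnt c hc idx hidx k)] at h1
  rw [← Finset.sum_filter, Finset.sum_const, card_filter_lt hin, smul_eq_mul] at h1
  omega

lemma zero_mem_eig {d : ℕ} : (0 : ((Fin j × Fin m) → Fin n) → ℂ) ∈ EigSet m n j d i := by
  refine ⟨fun π ρ idx => rfl, fun g _ => ?_⟩
  rw [matAct_zero, smul_zero]

lemma smul_mem_eig {d : ℕ} (c : ((Fin j × Fin m) → Fin n) → ℂ)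
    (hc : c ∈ EigSet m n j d i) (r : ℂ) : r • c ∈ EigSet m n j d i := by
  constructor
  · intro π ρ idx
    simp only [Pi.smul_apply, smul_eq_mul]
    rw [hc.1 π ρ idx]
  · intro g hg
    rw [matAct_smul, hc.2 g hg, smul_comm]

lemma res_HInv (h : i ≤ n) (c : ((Fin j × Fin m) → Fin n) → ℂ) (hc : HInv c) :
    HInv (resT h c) := fun π ρ idx => hc π ρ (fun t => Fin.castLE h (idx t))

lemma ext_HInv (h : i ≤ n) (c' : ((Fin j × Fin m) → Fin i) → ℂ) (hc : HInv c') :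
    HInv (extTensor h c') := by
  intro π ρ idx
  simp only [extTensor]
  have hiff : (∀ ab : Fin j × Fin m, ((idx (π ab.1, ρ ab.1 ab.2) : ℕ) < i))
      ↔ ∀ ab : Fin j × Fin m, ((idx ab : ℕ) < i) := by
    constructor
    · intro hh ab
      have := hh (π.symm ab.1, (ρ (π.symm ab.1)).symm ab.2)
      simpa using this
    · intro hh ab; exact hh _
  by_cases hlt : ∀ ab : Fin j × Fin m, ((idx ab : ℕ) < i)
  · rw [dif_pos (hiff.mpr hlt), dif_pos hlt]
    exact hc π ρ (fun ab => ⟨(idx ab : ℕ), hlt ab⟩)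
  · rw [dif_neg hlt, dif_neg (fun hcon => hlt (hiff.mp hcon))]


/-! ### restriction of a highest weight vector is an SL-invariant -/

lemma res_mem_SLInv {d : ℕ} (hi1 : 1 ≤ i) (hin : i ≤ n)
    (c : ((Fin j × Fin m) → Fin n) → ℂ) (hc : c ∈ EigSet m n j d i) :
    resT hin c ∈ SLInvSet m i j := by
  set c' : ((Fin j × Fin m) → Fin i) → ℂ := resT hin c with hc'
  have hval : ∀ idx, c idx ≠ 0 → ∀ t, ((idx t : ℕ) < i) := fun idx h => eig_valsupp c hc idx h
  have hcext : extTensor hin c' = c := ext_eq_self hin c hval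
  have hc'cnt : ∀ idx', c' idx' ≠ 0 → ∀ k : Fin i, cnt k idx' = d := by
    intro idx' hne k
    have h1 : c (fun t => Fin.castLE hin (idx' t)) ≠ 0 := hne
    have h2 := eig_cnt c hc _ h1 (Fin.castLE hin k)
    simp only [Fin.coe_castLE] at h2
    rw [if_pos k.2] at h2
    rw [← cnt_res hin k idx']
    exact h2
  have hbal : ∀ (a b : Fin i) idx', ((cnt a idx' : ℂ) - cnt b idx') * c' idx' = 0 := by
    intro a b idx'
    by_cases hz : c' idx' = 0
    · rw [hz, mul_zero]
    · rw [hc'cnt idx' hz a, hc'cnt idx' hz b, sub_self, zero_mul]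
  have hupper : ∀ a b : Fin i, a < b → ∀ s : ℂ, matAct (Matrix.transvection a b s) c' = c' := by
    intro a b hab s
    have habne : a ≠ b := ne_of_lt hab
    set gg : Matrix (Fin n) (Fin n) ℂ :=
      Matrix.transvection (Fin.castLE hin a) (Fin.castLE hin b) s with hgg
    have hcast : Fin.castLE hin a ≠ Fin.castLE hin b :=
      fun hcon => habne (Fin.castLE_injective hin hcon)
    have happly : ∀ x y : Fin n, gg x y = (if x = y then (1:ℂ) else 0)
        + (if Fin.castLE hin a = x ∧ Fin.castLE hin b = y then s else 0) := by
      intro x y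
      rw [hgg]
      simp only [Matrix.transvection, Matrix.add_apply, Matrix.one_apply,
        Matrix.single, Matrix.of_apply]
    have hUT : IsUT gg := by
      constructor
      · intro x y hyx
        rw [happly, if_neg (ne_of_gt hyx), if_neg, add_zero]
        rintro ⟨rfl, rfl⟩
        have : (a : ℕ) < (b : ℕ) := hab
        have h2 : (Fin.castLE hin b : Fin n) < Fin.castLE hin a := hyx
        have h3 : (b : ℕ) < (a : ℕ) := h2
        omega
      · rw [hgg, Matrix.det_transvection_of_ne _ _ hcast]; exact isUnit_one
    have hfix := hc.2 gg hUT
    have hwt : wtChar i d gg = 1 := by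
      rw [wtChar]
      have hone : ∀ k' ∈ Finset.univ.filter (fun k' : Fin n => (k' : ℕ) < i),
          gg k' k' = 1 := by
        intro k' _
        rw [happly, if_pos rfl, if_neg, add_zero]
        rintro ⟨rfl, hcon⟩
        exact hcast hcon.symm
      rw [Finset.prod_congr rfl hone, Finset.prod_const_one, one_pow]
    rw [hwt, one_smul] at hfix
    have hg0 : ∀ x y : Fin n, (y : ℕ) < i → ¬((x : ℕ) < i) → gg x y = 0 := by
      intro x y hy hx
      rw [happly, if_neg (fun hcon : x = y => hx (hcon ▸ hy)), if_neg, add_zero]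
      rintro ⟨rfl, -⟩
      exact hx (a.2 : ((Fin.castLE hin a : Fin n) : ℕ) < i)
    have htrans := matAct_ext hin gg hg0 c'
    have hg' : (Matrix.of fun x y : Fin i => gg (Fin.castLE hin x) (Fin.castLE hin y))
        = Matrix.transvection a b s := by
      ext x y
      rw [Matrix.of_apply, happly]
      simp only [Matrix.transvection, Matrix.add_apply, Matrix.one_apply,
        Matrix.single, Matrix.of_apply, Fin.castLE_inj]
    rw [hg', hcext, hfix] at htrans
    have hres := congrArg (resT hin) htrans.symm
    rw [res_ext] at hres
    rw [← hc'] at hres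
    exact hres
  have eRop : ∀ a b : Fin i, a < b → Rop a b c' = 0 := by
    intro a b hab
    rw [Rop_eq_Fop_one]
    exact Fop_eq_zero_of_fixed a b (ne_of_lt hab) c' (hupper a b hab) 1 le_rfl
  have allRop : ∀ a b : Fin i, a ≠ b → Rop a b c' = 0 := by
    intro a b hab
    rcases lt_or_gt_of_ne hab with h | h
    · exact eRop a b h
    · exact sl2_flip b a (ne_of_lt h) c' (hbal b a) (eRop b a h)
  have alltrans : ∀ (a b : Fin i), a ≠ b → ∀ s : ℂ,
      matAct (Matrix.transvection a b s) c' = c' := fun a b hab =>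
    fixed_of_Fop_zero a b hab c' (Fop_all_zero a b hab c' (allRop a b hab))
  have hdiag : ∀ D : Fin i → ℂ, (∏ k, D k) = 1 → matAct (Matrix.diagonal D) c' = c' := by
    intro D hD
    funext idx'
    rw [matAct_diagonal]
    by_cases hz : c' idx' = 0
    · rw [hz, mul_zero]
    · rw [prod_count]
      rw [Finset.prod_congr rfl (fun k (_ : k ∈ univ) => by rw [hc'cnt idx' hz k])]
      rw [Finset.prod_pow, hD, one_pow, one_mul]
  refine ⟨res_HInv hin c hc.1, ?_⟩
  intro g hdet
  obtain ⟨L, L', D, hM⟩ := Matrix.Pivot.exists_list_transvec_mul_diagonal_mul_list_transvec g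
  have hmatList : ∀ (LL : List (Matrix.TransvectionStruct (Fin i) ℂ)),
      matAct ((LL.map Matrix.TransvectionStruct.toMatrix).prod) c' = c' := by
    intro LL
    induction LL with
    | nil => rw [List.map_nil, List.prod_nil, matAct_one]
    | cons t LL ih =>
      rw [List.map_cons, List.prod_cons, matAct_mul, ih]
      exact alltrans t.i t.j t.hij t.c
  have hdetD : (∏ k, D k) = 1 := by
    have h1 := congrArg Matrix.det hM
    rw [hdet, Matrix.det_mul, Matrix.det_mul,
      Matrix.TransvectionStruct.det_toMatrix_prod, Matrix.TransvectionStruct.det_toMatrix_prod,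
      Matrix.det_diagonal, one_mul, mul_one] at h1
    exact h1.symm
  rw [hM, matAct_mul, matAct_mul, hmatList L', hdiag D hdetD, hmatList L]

/-! ### extension of an SL-invariant is a highest weight vector -/

lemma ext_mem_Eig (hi1 : 1 ≤ i) (hin : i ≤ n)
    (c0 : ((Fin i × Fin m) → Fin i) → ℂ) (hc0 : c0 ∈ SLInvSet m i i) :
    extTensor hin c0 ∈ EigSet m n i m i := by
  refine ⟨ext_HInv hin c0 hc0.1, ?_⟩
  intro g hUT
  have hg0 : ∀ x y : Fin n, (y : ℕ) < i → ¬((x : ℕ) < i) → g x y = 0 := by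
    intro x y hy hx
    exact hUT.1 x y (show (y : ℕ) < (x : ℕ) by omega)
  set g' : Matrix (Fin i) (Fin i) ℂ :=
    Matrix.of fun x y : Fin i => g (Fin.castLE hin x) (Fin.castLE hin y) with hg'
  have htrans := matAct_ext hin g hg0 c0
  have hdiagval : ∀ k : Fin n, g k k ≠ 0 := by
    have hdet : g.det = ∏ k, g k k :=
      Matrix.det_of_upperTriangular (fun x y hxy => hUT.1 x y hxy)
    have h2 := hUT.2
    rw [hdet] at h2
    intro k hk
    rw [Finset.prod_eq_zero (f := fun x : Fin n => g x x) (Finset.mem_univ k) hk] at h2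
    exact not_isUnit_zero h2
  have hg'UT : g'.BlockTriangular id := by
    intro x y hxy
    exact hUT.1 _ _ (show Fin.castLE hin y < Fin.castLE hin x from hxy)
  have hdetg' : g'.det = ∏ k : Fin i, g' k k := Matrix.det_of_upperTriangular hg'UT
  have hne : g'.det ≠ 0 := by
    rw [hdetg']
    exact Finset.prod_ne_zero_iff.mpr fun k _ => hdiagval _
  obtain ⟨α, hα⟩ := IsAlgClosed.exists_pow_nat_eq g'.det (show 0 < i from hi1)
  have hαne : α ≠ 0 := fun hz => hne (by rw [← hα, hz, zero_pow (by omega)])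
  have hsl : (α⁻¹ • g').det = 1 := by
    rw [Matrix.det_smul, ← hα, Fintype.card_fin, ← mul_pow, inv_mul_cancel₀ hαne, one_pow]
  have hinv := hc0.2 (α⁻¹ • g') hsl
  have hact : matAct g' c0 = (g'.det) ^ m • c0 := by
    have h1 : g' = α • (α⁻¹ • g') := by rw [smul_smul, mul_inv_cancel₀ hαne, one_smul]
    have h2 : matAct g' c0 = α ^ (i * m) • c0 := by
      conv_lhs => rw [h1]
      rw [matAct_smulMatrix, hinv]
    rw [h2, ← hα, ← pow_mul]
  rw [hact, ext_smul] at htrans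
  rw [htrans]
  congr 1
  rw [wtChar, hdetg']
  congr 1
  rw [filter_lt_eq_map hin, Finset.prod_map]
  rfl

end HW

/-- Let `m` be a positive even integer, `E = ℂ^n`, `1 ≤ i ≤ n`.  Granting Howe's result —
`[S^jj(S^m(W))]^{SL(W)} = 0` for `0 < jj < dim W`, and one-dimensional for `jj = dim W`
(`m` even) — the smallest positive `d` such that `V_E(dδ_i)` occurs in `S^•(S^m(E))` is
`d = m`: for `0 < d < m` no highest weight vector of weight `dδ_i` exists in any degree;
`V_E(mδ_i)` occurs, with multiplicity exactly one, in degree `i`; and it occurs in no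
other degree. -/
theorem smallest_d_is_m_and_multiplicity_one (n m i : ℕ)
    (hm : 0 < m) (heven : Even m) (hi1 : 1 ≤ i) (hin : i ≤ n)
    (howe1 : ∀ ν jj : ℕ, 0 < jj → jj < ν → SLInvSet m ν jj = {0})
    (howe2 : ∀ ν : ℕ, 0 < ν →
      ∃ c₀ ∈ SLInvSet m ν ν, c₀ ≠ 0 ∧ SLInvSet m ν ν = {x | ∃ t : ℂ, x = t • c₀}) :
    (∀ d j : ℕ, 0 < d → d < m → 0 < j → EigSet m n j d i = {0}) ∧
    (∃ c₀ ∈ EigSet m n i m i, c₀ ≠ 0 ∧ EigSet m n i m i = {x | ∃ t : ℂ, x = t • c₀}) ∧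
    (∀ j : ℕ, 0 < j → j ≠ i → EigSet m n j m i = {0}) := by
  have hi0 : 0 < i := hi1
  refine ⟨?_, ?_, ?_⟩
  · -- no highest weight vector of weight d·δ_i with 0 < d < m, in any degree
    intro d j hd hdm hj
    apply Set.eq_singleton_iff_unique_mem.mpr
    refine ⟨HW.zero_mem_eig, ?_⟩
    intro c hcmem
    by_contra hne
    have hdim := HW.eig_dim c hcmem hne hin
    have hji : j < i := by
      have h1 : j * m < i * m := by
        rw [hdim]
        exact mul_lt_mul_of_pos_left hdm hi0
      exact lt_of_mul_lt_mul_right h1 (Nat.zero_le m)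
    have hres := HW.res_mem_SLInv hi1 hin c hcmem
    rw [howe1 i j hj hji] at hres
    have h0 : HW.resT hin c = 0 := hres
    have h2 := HW.ext_eq_self hin c (fun idx h => HW.eig_valsupp c hcmem idx h)
    rw [h0, HW.ext_zero] at h2
    exact hne h2.symm
  · -- V(m·δ_i) occurs in degree i with multiplicity one
    obtain ⟨c₀', hc₀mem, hc₀ne, hline⟩ := howe2 i hi0
    refine ⟨extTensor hin c₀', HW.ext_mem_Eig hi1 hin c₀' hc₀mem,
      HW.ext_ne_zero hin c₀' hc₀ne, ?_⟩
    ext c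
    simp only [Set.mem_setOf_eq]
    constructor
    · intro hcmem
      have hres := HW.res_mem_SLInv hi1 hin c hcmem
      rw [hline] at hres
      obtain ⟨t, ht⟩ := hres
      refine ⟨t, ?_⟩
      have hext := HW.ext_eq_self hin c (fun idx h => HW.eig_valsupp c hcmem idx h)
      rw [← hext, ht, HW.ext_smul]
    · rintro ⟨t, rfl⟩
      exact HW.smul_mem_eig _ (HW.ext_mem_Eig hi1 hin c₀' hc₀mem) t
  · -- V(m·δ_i) occurs in no other degree
    intro j hj hji
    apply Set.eq_singleton_iff_unique_mem.mpr
    refine ⟨HW.zero_mem_eig, ?_⟩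
    intro c hcmem
    by_contra hne
    have hdim := HW.eig_dim c hcmem hne hin
    exact hji (Nat.eq_of_mul_eq_mul_right hm hdim)
end

section
/- Let m be even, 1 ≤ i ≤ m, V_m = ℂ^m, v_o ∈ S^m(V_m*) the symmetrization of v*_1⊗···⊗v*_m, 𝔳_o ∈ S^m(V_m) the symmetrization of v_1⊗···⊗v_m, and B_o the rectangular tableau of shape (m^i) filled with 1,...,im row by row, with S(B_o) = (∑_{μ∈Col(B_o)} sgn(μ) μ)·(∑_{σ∈Row(B_o)} σ) the associated Young symmetrizer element of ℂ[S_{im}] acting on ⊗^{im} V_m. Then ⟨v_o^{⊗i}, S(B_o)·𝔳_o^{⊗i}⟩ = (1/m!)^i · ∑_{𝒜 ∈ S(i,m)} (#L^+_𝒜 − #L^−_𝒜)^2, where the sum runs over all patterns 𝒜 of size (i,m) and L^±_𝒜 are the column-even/odd Latin (i,m)-rectangles with pattern 𝒜. -/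
open Finset

/-- The element of the column group of the rectangular tableau `B_o` (with rows indexed by
`Fin i` and columns by `Fin m`) determined by `μ : Fin m → S_i`: the permutation
`(a,b) ↦ (μ_b a, b)` of the tensor positions. -/
def colPerm {i m : ℕ} (μ : Fin m → Equiv.Perm (Fin i)) : Equiv.Perm (Fin i × Fin m) :=
  ((Equiv.prodComm (Fin i) (Fin m)).trans
    (Equiv.prodShear (Equiv.refl (Fin m)) μ)).trans (Equiv.prodComm (Fin m) (Fin i))

/-- The element of the row group of `B_o` determined by `ρ : Fin i → S_m`: the permutation
`(a,b) ↦ (a, ρ_a b)`. -/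
def rowPerm {i m : ℕ} (ρ : Fin i → Equiv.Perm (Fin m)) : Equiv.Perm (Fin i × Fin m) :=
  Equiv.prodShear (Equiv.refl (Fin i)) ρ

open scoped Classical in
/-- The coordinates of `v_o^{⊗ i}` (equally of `𝔳_o^{⊗ i}`) in `⊗^{im} ℂ^m`, the tensor
positions being indexed by `Fin i × Fin m`: `v_o` is the symmetrization
`(1/m!) ∑_σ v_{σ(1)} ⊗ ⋯ ⊗ v_{σ(m)}`, so the coefficient of the basis vector indexed by
`idx` is `(1/m!)^i` if every row `b ↦ idx (a, b)` is a bijection, and `0` otherwise. -/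
noncomputable def symPowCoef (i m : ℕ) : ((Fin i × Fin m) → Fin m) → ℂ :=
  fun idx =>
    if ∀ a : Fin i, Function.Bijective (fun b => idx (a, b)) then
      ((m.factorial : ℂ))⁻¹ ^ i
    else 0

open scoped Classical

namespace LatinAux

variable {i m : ℕ}

def colProd {i m : ℕ} (v : Fin i → Fin m) : ℤ :=
  ∏ p : Fin i, ∏ p' ∈ Finset.univ.filter (fun p' => p < p'),
    (((v p' : ℕ) : ℤ) - ((v p : ℕ) : ℤ))

lemma colSign_eq (A : Fin i → Fin m → Fin m) :
    colSign A = ∏ q, Int.sign (colProd (fun p => A p q)) := rfl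

lemma colProd_eq (v : Fin i → Fin m) :
    colProd v = ∏ p : Fin i, ∏ p' ∈ Finset.Ioi p, (((v p' : ℕ) : ℤ) - ((v p : ℕ) : ℤ)) := by
  apply Finset.prod_congr rfl
  intro p _
  apply Finset.prod_congr _ (fun _ _ => rfl)
  ext p'; simp

lemma colProd_comp (v : Fin i → Fin m) (σ : Equiv.Perm (Fin i)) :
    colProd (v ∘ σ) = ((Equiv.Perm.sign σ : ℤˣ) : ℤ) * colProd v := by
  have h1 := Matrix.det_vandermonde (R := ℤ) (fun p => ((v p : ℕ) : ℤ))
  have h2 := Matrix.det_vandermonde (R := ℤ) (fun p => ((v (σ p) : ℕ) : ℤ))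
  have h4 : (Matrix.vandermonde (fun p : Fin i => ((v p : ℕ) : ℤ))).submatrix σ id
      = Matrix.vandermonde (fun p => ((v (σ p) : ℕ) : ℤ)) := by
    ext a b; simp [Matrix.vandermonde, Matrix.submatrix]
  have h3 := Matrix.det_permute σ (Matrix.vandermonde (fun p : Fin i => ((v p : ℕ) : ℤ)))
  rw [h4, h2, h1] at h3
  rw [colProd_eq, colProd_eq]
  simpa [Function.comp] using h3

lemma colProd_ne_zero {v : Fin i → Fin m} (hv : Function.Injective v) : colProd v ≠ 0 := by
  rw [colProd_eq]
  apply Finset.prod_ne_zero_iff.mpr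
  intro p _
  apply Finset.prod_ne_zero_iff.mpr
  intro p' hp'
  have hne : p' ≠ p := (Finset.mem_Ioi.mp hp').ne'
  intro h
  rw [sub_eq_zero] at h
  exact hne (hv (Fin.ext (by exact_mod_cast h)))

lemma sign_colProd_mul_self {v : Fin i → Fin m} (hv : Function.Injective v) :
    (colProd v).sign * (colProd v).sign = 1 := by
  rcases (colProd_ne_zero hv).lt_or_gt with h | h
  · rw [Int.sign_eq_neg_one_of_neg h]; decide
  · rw [Int.sign_eq_one_of_pos h]; decide

lemma colSign_mul_self {A : Fin i → Fin m → Fin m} (hA : IsLatinRect A) :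
    colSign A * colSign A = 1 := by
  rw [colSign_eq, ← Finset.prod_mul_distrib]
  exact Finset.prod_eq_one fun q _ => sign_colProd_mul_self (hA.2 q)

lemma colSign_eq_one_or {A : Fin i → Fin m → Fin m} (hA : IsLatinRect A) :
    colSign A = 1 ∨ colSign A = -1 :=
  Int.isUnit_iff.mp (IsUnit.of_mul_eq_one _ (colSign_mul_self hA))

lemma colSign_comp (A : Fin i → Fin m → Fin m) (μ : Fin m → Equiv.Perm (Fin i)) :
    colSign (fun p q => A (μ q p) q)
      = (∏ q, ((Equiv.Perm.sign (μ q) : ℤˣ) : ℤ)) * colSign A := by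
  rw [colSign_eq, colSign_eq, ← Finset.prod_mul_distrib]
  apply Finset.prod_congr rfl
  intro q _
  have h : (fun p => A (μ q p) q) = (fun p => A p q) ∘ μ q := rfl
  rw [h, colProd_comp, Int.sign_mul]
  congr 1
  rcases Int.units_eq_one_or (Equiv.Perm.sign (μ q)) with h' | h' <;> rw [h'] <;> simp


lemma pattern_of_latin {A : Fin i → Fin m → Fin m} (hA : IsLatinRect A) :
    IsPattern i (patternOf A) := by
  constructor
  · intro q
    rw [patternOf, Finset.card_image_of_injective _ (hA.2 q), Finset.card_univ, Fintype.card_fin]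
  · intro x
    set e : Fin i → Fin m := fun p => (Equiv.ofBijective (A p) (hA.1 p)).symm x with he
    have hAe : ∀ p, A p (e p) = x := fun p =>
      (Equiv.ofBijective (A p) (hA.1 p)).apply_symm_apply x
    have hiff : ∀ p q, A p q = x ↔ q = e p := by
      intro p q
      constructor
      · intro h
        exact (hA.1 p).1 (by rw [h, hAe])
      · rintro rfl; exact hAe p
    have heinj : Function.Injective e := by
      intro a b hab
      apply hA.2 (e a)
      show A a (e a) = A b (e a)
      rw [hAe a, hab, hAe b]
    have himg : (Finset.univ.filter fun q => x ∈ patternOf A q)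
        = Finset.image e Finset.univ := by
      ext q
      simp only [Finset.mem_filter, Finset.mem_univ, true_and, Finset.mem_image, patternOf]
      constructor
      · rintro ⟨p, hp⟩
        exact ⟨p, ((hiff p q).mp hp).symm⟩
      · rintro ⟨p, rfl⟩
        exact ⟨p, hAe p⟩
    rw [himg, Finset.card_image_of_injective _ heinj, Finset.card_univ, Fintype.card_fin]

lemma exists_perm_comp {u v : Fin i → Fin m} (hu : Function.Injective u)
    (hv : Function.Injective v)
    (h : Finset.image u Finset.univ = Finset.image v Finset.univ) :
    ∃ σ : Equiv.Perm (Fin i), ∀ p, u (σ p) = v p := by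
  have hex : ∀ p, ∃ p', u p' = v p := by
    intro p
    have hm : v p ∈ Finset.image u Finset.univ := by
      rw [h]; exact Finset.mem_image_of_mem _ (Finset.mem_univ p)
    rcases Finset.mem_image.mp hm with ⟨p', -, hp'⟩
    exact ⟨p', hp'⟩
  choose f hf using hex
  have hfinj : Function.Injective f := fun a b hab => hv (by rw [← hf a, ← hf b, hab])
  exact ⟨Equiv.ofBijective f (Finite.injective_iff_bijective.mp hfinj), fun p => hf p⟩

noncomputable def recoverMu (A B : Fin i → Fin m → Fin m) : Fin m → Equiv.Perm (Fin i) :=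
  fun q => if h : ∃ σ : Equiv.Perm (Fin i), ∀ p, A (σ p) q = B p q then h.choose else 1

lemma recoverMu_spec {A B : Fin i → Fin m → Fin m} (hA : IsLatinRect A) (hB : IsLatinRect B)
    (hP : patternOf B = patternOf A) (q : Fin m) (p : Fin i) :
    A (recoverMu A B q p) q = B p q := by
  have hex : ∃ σ : Equiv.Perm (Fin i), ∀ p, A (σ p) q = B p q :=
    exists_perm_comp (hA.2 q) (hB.2 q) (congrFun hP q).symm
  rw [recoverMu, dif_pos hex]
  exact hex.choose_spec p


lemma inner_cancel {A : Fin i → Fin m → Fin m} {q : Fin m} {p p' : Fin i}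
    (hne : p ≠ p') (heq : A p q = A p' q) :
    (∑ μ : Fin m → Equiv.Perm (Fin i),
        if ((∀ r, Function.Bijective (A r)) ∧ ∀ r, Function.Bijective fun s => A (μ s r) s)
        then ((∏ b, Equiv.Perm.sign (μ b) : ℤˣ) : ℤ) else 0) = 0 := by
  have hswap : ∀ x, A (Equiv.swap p p' x) q = A x q := by
    intro x
    rcases eq_or_ne x p with rfl | h1
    · rw [Equiv.swap_apply_left]; exact heq.symm
    rcases eq_or_ne x p' with rfl | h2
    · rw [Equiv.swap_apply_right]; exact heq
    · rw [Equiv.swap_apply_of_ne_of_ne h1 h2]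
  have hcond : ∀ (μ : Fin m → Equiv.Perm (Fin i)) (r : Fin i),
      (fun s => A ((Function.update μ q (Equiv.swap p p' * μ q)) s r) s)
        = fun s => A (μ s r) s := by
    intro μ r
    funext s
    by_cases hs : s = q
    · subst hs
      rw [Function.update_self]
      exact hswap (μ s r)
    · rw [Function.update_of_ne hs]
  have hsign : ∀ μ : Fin m → Equiv.Perm (Fin i),
      (∏ b, Equiv.Perm.sign ((Function.update μ q (Equiv.swap p p' * μ q)) b))
        = - ∏ b, Equiv.Perm.sign (μ b) := by
    intro μ
    have h1 : (fun b => Equiv.Perm.sign ((Function.update μ q (Equiv.swap p p' * μ q)) b))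
        = Function.update (fun b => Equiv.Perm.sign (μ b)) q
            (Equiv.Perm.sign (Equiv.swap p p' * μ q)) := by
      funext b
      by_cases hb : b = q
      · subst hb; rw [Function.update_self, Function.update_self]
      · rw [Function.update_of_ne hb, Function.update_of_ne hb]
    calc (∏ b, Equiv.Perm.sign ((Function.update μ q (Equiv.swap p p' * μ q)) b))
        = ∏ b, (Function.update (fun b => Equiv.Perm.sign (μ b)) q
            (Equiv.Perm.sign (Equiv.swap p p' * μ q))) b := by rw [h1]
      _ = Equiv.Perm.sign (Equiv.swap p p' * μ q) * ∏ b ∈ univ \ {q}, Equiv.Perm.sign (μ b) := by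
          rw [Finset.prod_update_of_mem (Finset.mem_univ q)]
      _ = - (Equiv.Perm.sign (μ q) * ∏ b ∈ univ.erase q, Equiv.Perm.sign (μ b)) := by
          rw [Equiv.Perm.sign_mul, Equiv.Perm.sign_swap hne, Finset.sdiff_singleton_eq_erase,
            neg_one_mul, neg_mul]
      _ = - ∏ b, Equiv.Perm.sign (μ b) := by
          rw [Finset.mul_prod_erase univ (fun b => Equiv.Perm.sign (μ b)) (Finset.mem_univ q)]
  refine Finset.sum_involution
    (fun μ _ => Function.update μ q (Equiv.swap p p' * μ q)) ?_ ?_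
    (fun μ _ => Finset.mem_univ _) ?_
  · intro μ _
    by_cases hc : ((∀ r, Function.Bijective (A r)) ∧ ∀ r, Function.Bijective fun s => A (μ s r) s)
    · rw [if_pos hc, if_pos, hsign, Units.val_neg, add_neg_cancel]
      refine ⟨hc.1, fun r => ?_⟩
      rw [hcond μ r]
      exact hc.2 r
    · rw [if_neg hc, if_neg, add_zero]
      intro hc2
      exact hc ⟨hc2.1, fun r => by rw [← hcond μ r]; exact hc2.2 r⟩
  · intro μ _ _ hgμ
    have h0 : (Equiv.swap p p' * μ q) = μ q := by
      simpa using congrFun hgμ q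
    have h2 := congrArg (fun σ : Equiv.Perm (Fin i) => σ ((μ q)⁻¹ p)) h0
    simp only [Equiv.Perm.mul_apply, Equiv.Perm.inv_def, Equiv.apply_symm_apply, Equiv.swap_apply_left] at h2
    exact hne h2.symm
  · intro μ _
    show Function.update (Function.update μ q (Equiv.swap p p' * μ q)) q
        (Equiv.swap p p' * (Function.update μ q (Equiv.swap p p' * μ q)) q) = μ
    rw [Function.update_idem]
    have : Function.update μ q (Equiv.swap p p' * μ q) q = Equiv.swap p p' * μ q :=
      Function.update_self _ _ _
    rw [this, ← mul_assoc, Equiv.swap_mul_self, one_mul, Function.update_eq_self]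


lemma inner_latin {A : Fin i → Fin m → Fin m} (hA : IsLatinRect A) :
    (∑ μ : Fin m → Equiv.Perm (Fin i),
        if (∀ p, Function.Bijective fun q => A (μ q p) q)
        then ((∏ b, Equiv.Perm.sign (μ b) : ℤˣ) : ℤ) else 0)
      = ∑ B ∈ Finset.univ.filter
          (fun B : Fin i → Fin m → Fin m => IsLatinRect B ∧ patternOf B = patternOf A),
          colSign A * colSign B := by
  rw [← Finset.sum_filter]
  -- basic facts about the forward map
  have hfwd : ∀ μ : Fin m → Equiv.Perm (Fin i),
      (∀ p, Function.Bijective fun q => A (μ q p) q) →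
      IsLatinRect (fun p q => A (μ q p) q) ∧ patternOf (fun p q => A (μ q p) q) = patternOf A := by
    intro μ hμ
    refine ⟨⟨hμ, fun q => ?_⟩, ?_⟩
    · exact fun a b hab => (μ q).injective (hA.2 q hab)
    · funext q
      ext x
      simp only [patternOf, Finset.mem_image, Finset.mem_univ, true_and]
      constructor
      · rintro ⟨p, rfl⟩; exact ⟨μ q p, rfl⟩
      · rintro ⟨p, rfl⟩; exact ⟨(μ q).symm p, by rw [Equiv.apply_symm_apply]⟩
  refine Finset.sum_nbij' (fun μ => fun p q => A (μ q p) q) (fun B => recoverMu A B)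
    ?_ ?_ ?_ ?_ ?_
  · intro μ hμ
    rw [Finset.mem_filter] at hμ ⊢
    exact ⟨Finset.mem_univ _, hfwd μ hμ.2⟩
  · intro B hB
    rw [Finset.mem_filter] at hB ⊢
    refine ⟨Finset.mem_univ _, fun p => ?_⟩
    have : (fun q => A (recoverMu A B q p) q) = fun q => B p q :=
      funext fun q => recoverMu_spec hA hB.2.1 hB.2.2 q p
    rw [this]
    exact hB.2.1.1 p
  · intro μ hμ
    rw [Finset.mem_filter] at hμ
    obtain ⟨hL, hP⟩ := hfwd μ hμ.2
    funext q
    apply Equiv.ext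
    intro p
    apply hA.2 q
    exact recoverMu_spec hA hL hP q p
  · intro B hB
    rw [Finset.mem_filter] at hB
    funext p q
    exact recoverMu_spec hA hB.2.1 hB.2.2 q p
  · intro μ hμ
    rw [Finset.mem_filter] at hμ
    have h1 : colSign (fun p q => A (μ q p) q)
        = (∏ q, ((Equiv.Perm.sign (μ q) : ℤˣ) : ℤ)) * colSign A := colSign_comp A μ
    have h2 : colSign A * colSign (fun p q => A (μ q p) q)
        = ∏ q, ((Equiv.Perm.sign (μ q) : ℤˣ) : ℤ) := by
      rw [h1, mul_comm (∏ q, ((Equiv.Perm.sign (μ q) : ℤˣ) : ℤ)) (colSign A), ← mul_assoc,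
        colSign_mul_self hA, one_mul]
    rw [h2]
    push_cast
    rfl


noncomputable def Fsum (i : ℕ) {m : ℕ} (P : Fin m → Finset (Fin m)) : ℤ :=
  ∑ B ∈ Finset.univ.filter
      (fun B : Fin i → Fin m → Fin m => IsLatinRect B ∧ patternOf B = P), colSign B

lemma F_eq (P : Fin m → Finset (Fin m)) :
    Fsum i P = (Lpos i P : ℤ) - (Lneg i P : ℤ) := by
  have hpos : (Lpos i P : ℤ) = ((Finset.univ.filter
      (fun B : Fin i → Fin m → Fin m =>
        (IsLatinRect B ∧ patternOf B = P) ∧ colSign B = 1)).card : ℤ) := by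
    rw [Lpos, Nat.card_eq_fintype_card, Fintype.card_subtype]
    congr 2
    ext B
    simp [and_assoc]
  have hneg : (Lneg i P : ℤ) = ((Finset.univ.filter
      (fun B : Fin i → Fin m → Fin m =>
        (IsLatinRect B ∧ patternOf B = P) ∧ colSign B = -1)).card : ℤ) := by
    rw [Lneg, Nat.card_eq_fintype_card, Fintype.card_subtype]
    congr 2
    ext B
    simp [and_assoc]
  rw [Fsum, ← Finset.sum_filter_add_sum_filter_not
      (Finset.univ.filter (fun B : Fin i → Fin m → Fin m => IsLatinRect B ∧ patternOf B = P))
      (fun B => colSign B = 1)]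
  have e1 : (Finset.univ.filter
        (fun B : Fin i → Fin m → Fin m => IsLatinRect B ∧ patternOf B = P)).filter
        (fun B => colSign B = 1)
      = Finset.univ.filter (fun B : Fin i → Fin m → Fin m =>
        (IsLatinRect B ∧ patternOf B = P) ∧ colSign B = 1) := by
    rw [Finset.filter_filter]
  have e2 : (Finset.univ.filter
        (fun B : Fin i → Fin m → Fin m => IsLatinRect B ∧ patternOf B = P)).filter
        (fun B => ¬ colSign B = 1)
      = Finset.univ.filter (fun B : Fin i → Fin m → Fin m =>
        (IsLatinRect B ∧ patternOf B = P) ∧ colSign B = -1) := by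
    rw [Finset.filter_filter]
    apply Finset.filter_congr
    intro B _
    constructor
    · rintro ⟨h1, h2⟩
      exact ⟨h1, (colSign_eq_one_or h1.1).resolve_left h2⟩
    · rintro ⟨h1, h2⟩
      refine ⟨h1, ?_⟩
      rw [h2]; decide
  have s1 : ∑ B ∈ (Finset.univ.filter
        (fun B : Fin i → Fin m → Fin m => IsLatinRect B ∧ patternOf B = P)).filter
        (fun B => colSign B = 1), colSign B
      = (Lpos i P : ℤ) := by
    rw [Finset.sum_congr rfl (fun B hB => (Finset.mem_filter.mp hB).2),
      Finset.sum_const, nsmul_eq_mul, mul_one, e1, hpos]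
  have s2 : ∑ B ∈ (Finset.univ.filter
        (fun B : Fin i → Fin m → Fin m => IsLatinRect B ∧ patternOf B = P)).filter
        (fun B => ¬ colSign B = 1), colSign B
      = -(Lneg i P : ℤ) := by
    rw [e2, Finset.sum_congr rfl (fun B hB => show colSign B = -1 from
        (Finset.mem_filter.mp hB).2.2),
      Finset.sum_const, nsmul_eq_mul, mul_neg_one, hneg]
  rw [s1, s2, sub_eq_add_neg]

theorem core (i m : ℕ) :
    (∑ A : Fin i → Fin m → Fin m, ∑ μ : Fin m → Equiv.Perm (Fin i),
        if ((∀ p, Function.Bijective (A p)) ∧ ∀ p, Function.Bijective fun q => A (μ q p) q)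
        then ((∏ b, Equiv.Perm.sign (μ b) : ℤˣ) : ℤ) else 0)
      = ∑ P ∈ Finset.univ.filter (fun P : Fin m → Finset (Fin m) => IsPattern i P),
          ((Lpos i P : ℤ) - (Lneg i P : ℤ)) ^ 2 := by
  rw [← Finset.sum_filter_add_sum_filter_not Finset.univ
      (fun A : Fin i → Fin m → Fin m => IsLatinRect A)]
  have hnull : ∑ A ∈ Finset.univ.filter
      (fun A : Fin i → Fin m → Fin m => ¬ IsLatinRect A),
      (∑ μ : Fin m → Equiv.Perm (Fin i),
        if ((∀ p, Function.Bijective (A p)) ∧ ∀ p, Function.Bijective fun q => A (μ q p) q)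
        then ((∏ b, Equiv.Perm.sign (μ b) : ℤˣ) : ℤ) else 0) = 0 := by
    apply Finset.sum_eq_zero
    intro A hAm
    have hA : ¬ IsLatinRect A := (Finset.mem_filter.mp hAm).2
    by_cases h1 : ∀ p, Function.Bijective (A p)
    · have h2 : ¬ ∀ q, Function.Injective fun p => A p q := fun h => hA ⟨h1, h⟩
      obtain ⟨q, hq⟩ := not_forall.mp h2
      obtain ⟨p, p', heq, hne⟩ := Function.not_injective_iff.mp hq
      exact inner_cancel hne heq
    · apply Finset.sum_eq_zero
      intro μ _
      rw [if_neg]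
      rintro ⟨hh, -⟩
      exact h1 hh
  rw [hnull, add_zero]
  have step1 : ∀ A ∈ Finset.univ.filter (fun A : Fin i → Fin m → Fin m => IsLatinRect A),
      (∑ μ : Fin m → Equiv.Perm (Fin i),
        if ((∀ p, Function.Bijective (A p)) ∧ ∀ p, Function.Bijective fun q => A (μ q p) q)
        then ((∏ b, Equiv.Perm.sign (μ b) : ℤˣ) : ℤ) else 0)
      = colSign A * Fsum i (patternOf A) := by
    intro A hAm
    have hA : IsLatinRect A := (Finset.mem_filter.mp hAm).2
    have h1 : ∀ μ : Fin m → Equiv.Perm (Fin i),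
        (if ((∀ p, Function.Bijective (A p)) ∧ ∀ p, Function.Bijective fun q => A (μ q p) q)
          then ((∏ b, Equiv.Perm.sign (μ b) : ℤˣ) : ℤ) else 0)
        = (if (∀ p, Function.Bijective fun q => A (μ q p) q)
          then ((∏ b, Equiv.Perm.sign (μ b) : ℤˣ) : ℤ) else 0) := by
      intro μ
      exact if_congr (and_iff_right hA.1) rfl rfl
    rw [Finset.sum_congr rfl (fun μ _ => h1 μ), inner_latin hA, Fsum, ← Finset.mul_sum]
  rw [Finset.sum_congr rfl step1]
  rw [← Finset.sum_fiberwise (Finset.univ.filter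
      (fun A : Fin i → Fin m → Fin m => IsLatinRect A)) patternOf
      (fun A => colSign A * Fsum i (patternOf A))]
  have step2 : ∀ P : Fin m → Finset (Fin m),
      (∑ A ∈ (Finset.univ.filter (fun A : Fin i → Fin m → Fin m => IsLatinRect A)).filter
        (fun A => patternOf A = P), colSign A * Fsum i (patternOf A))
      = Fsum i P * Fsum i P := by
    intro P
    have e3 : (Finset.univ.filter (fun A : Fin i → Fin m → Fin m => IsLatinRect A)).filter
        (fun A => patternOf A = P)
      = Finset.univ.filter (fun A : Fin i → Fin m → Fin m =>
          IsLatinRect A ∧ patternOf A = P) := by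
      rw [Finset.filter_filter]
    rw [Finset.sum_congr e3 (fun A hAm => by
      rw [(Finset.mem_filter.mp hAm).2.2]), ← Finset.sum_mul]
    rfl
  rw [Finset.sum_congr rfl (fun P _ => step2 P)]
  rw [← Finset.sum_filter_add_sum_filter_not Finset.univ
      (fun P : Fin m → Finset (Fin m) => IsPattern i P) (fun P => Fsum i P * Fsum i P)]
  have hnull2 : ∑ P ∈ Finset.univ.filter
      (fun P : Fin m → Finset (Fin m) => ¬ IsPattern i P), Fsum i P * Fsum i P = 0 := by
    apply Finset.sum_eq_zero
    intro P hPm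
    have hP : ¬ IsPattern i P := (Finset.mem_filter.mp hPm).2
    have : Fsum i P = 0 := by
      apply Finset.sum_eq_zero
      intro B hBm
      exfalso
      obtain ⟨hB, hp⟩ := (Finset.mem_filter.mp hBm).2
      exact hP (hp ▸ pattern_of_latin hB)
    rw [this, mul_zero]
  rw [hnull2, add_zero]
  apply Finset.sum_congr rfl
  intro P _
  rw [F_eq, sq]


end LatinAux

open scoped Classical in
/-- `⟨v_o^{⊗i}, S(B_o)·𝔳_o^{⊗i}⟩ = (1/m!)^i ∑_{𝒜 ∈ S(i,m)} (#L^+_𝒜 − #L^−_𝒜)²`: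
the pairing of `v_o^{⊗i}` with the image of `𝔳_o^{⊗i}` under the Young symmetrizer
`S(B_o) = (∑_{μ ∈ Col(B_o)} sgn(μ) μ)·(∑_{σ ∈ Row(B_o)} σ)` of the rectangular tableau
`B_o`, computed in coordinates, equals `(1/m!)^i` times the sum over all patterns `𝒜` of
size `(i,m)` of the square of the difference between the numbers of column-even and
column-odd Latin `(i,m)`-rectangles with pattern `𝒜`. -/

theorem pairing_youngSymmetrizer_eq_latin_sum (i m : ℕ)
    (heven : Even m) (hi1 : 1 ≤ i) (him : i ≤ m) :
    ∑ idx : (Fin i × Fin m) → Fin m, symPowCoef i m idx *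
        (∑ μ : Fin m → Equiv.Perm (Fin i), ∑ ρ : Fin i → Equiv.Perm (Fin m),
          ((((∏ b, Equiv.Perm.sign (μ b) : ℤˣ) : ℤ)) : ℂ) *
            symPowCoef i m (idx ∘ ⇑(colPerm μ * rowPerm ρ)))
      = ((m.factorial : ℂ))⁻¹ ^ i *
          ∑ P ∈ Finset.univ.filter (fun P : Fin m → Finset (Fin m) => IsPattern i P),
            (((Lpos i P : ℂ) - (Lneg i P : ℂ)) ^ 2) := by
  have hmfac : (m.factorial : ℂ) ≠ 0 := Nat.cast_ne_zero.mpr (Nat.factorial_ne_zero m)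
  set c : ℂ := ((m.factorial : ℂ))⁻¹ ^ i with hc
  -- Step A: the inner symPowCoef does not depend on ρ
  have hA : ∀ (idx : (Fin i × Fin m) → Fin m) (μ : Fin m → Equiv.Perm (Fin i))
      (ρ : Fin i → Equiv.Perm (Fin m)),
      symPowCoef i m (idx ∘ ⇑(colPerm μ * rowPerm ρ)) =
        if (∀ a : Fin i, Function.Bijective fun b => idx (μ b a, b)) then c else 0 := by
    intro idx μ ρ
    show (if ∀ a : Fin i, Function.Bijective (fun b => (idx ∘ ⇑(colPerm μ * rowPerm ρ)) (a, b))
        then ((m.factorial : ℂ))⁻¹ ^ i else 0) = _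
    refine if_congr ?_ rfl rfl
    have hcomp : ∀ a : Fin i,
        (fun b => (idx ∘ ⇑(colPerm μ * rowPerm ρ)) (a, b))
          = (fun b => idx (μ b a, b)) ∘ ⇑(ρ a) := fun a => rfl
    constructor
    · intro h a
      exact (Function.Bijective.of_comp_iff _ (ρ a).bijective).mp (hcomp a ▸ h a)
    · intro h a
      rw [hcomp a]
      exact (Function.Bijective.of_comp_iff _ (ρ a).bijective).mpr (h a)
  -- Step B: summing over ρ
  have key : ∀ idx : (Fin i × Fin m) → Fin m,
      symPowCoef i m idx *
        (∑ μ : Fin m → Equiv.Perm (Fin i), ∑ ρ : Fin i → Equiv.Perm (Fin m),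
          ((((∏ b, Equiv.Perm.sign (μ b) : ℤˣ) : ℤ)) : ℂ) *
            symPowCoef i m (idx ∘ ⇑(colPerm μ * rowPerm ρ)))
      = c * ∑ μ : Fin m → Equiv.Perm (Fin i),
          (if ((∀ a : Fin i, Function.Bijective fun b => idx (a, b)) ∧
              ∀ a : Fin i, Function.Bijective fun b => idx (μ b a, b))
            then ((((∏ b, Equiv.Perm.sign (μ b) : ℤˣ) : ℤ)) : ℂ) else 0) := by
    intro idx
    have h1 : ∀ μ : Fin m → Equiv.Perm (Fin i),
        (∑ ρ : Fin i → Equiv.Perm (Fin m),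
          ((((∏ b, Equiv.Perm.sign (μ b) : ℤˣ) : ℤ)) : ℂ) *
            symPowCoef i m (idx ∘ ⇑(colPerm μ * rowPerm ρ)))
        = (if (∀ a : Fin i, Function.Bijective fun b => idx (μ b a, b))
            then ((((∏ b, Equiv.Perm.sign (μ b) : ℤˣ) : ℤ)) : ℂ) else 0) := by
      intro μ
      rw [Finset.sum_congr rfl (fun ρ _ => by rw [hA idx μ ρ])]
      rw [Finset.sum_const, Finset.card_univ]
      have hcard : Fintype.card (Fin i → Equiv.Perm (Fin m)) = m.factorial ^ i := by
        rw [Fintype.card_fun, Fintype.card_perm, Fintype.card_fin, Fintype.card_fin]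
      rw [hcard, nsmul_eq_mul, Nat.cast_pow]
      by_cases h2 : ∀ a : Fin i, Function.Bijective fun b => idx (μ b a, b)
      · rw [if_pos h2, if_pos h2, hc, mul_comm, mul_assoc, ← mul_pow,
          inv_mul_cancel₀ hmfac, one_pow, mul_one]
      · rw [if_neg h2, if_neg h2, mul_zero, mul_zero]
    rw [Finset.sum_congr rfl (fun μ _ => h1 μ)]
    show (if ∀ a : Fin i, Function.Bijective (fun b => idx (a, b)) then c else 0) * _ = _
    by_cases h0 : ∀ a : Fin i, Function.Bijective fun b => idx (a, b)
    · rw [if_pos h0]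
      congr 1
      apply Finset.sum_congr rfl
      intro μ _
      exact (if_congr (and_iff_right h0) rfl rfl).symm
    · rw [if_neg h0, zero_mul]
      rw [Finset.sum_congr rfl (fun μ _ => if_neg (fun hh => h0 hh.1)),
        Finset.sum_const_zero, mul_zero]
  rw [Finset.sum_congr rfl (fun idx _ => key idx), ← Finset.mul_sum]
  congr 1
  -- reindex idx ↦ A
  have reindex : (∑ idx : (Fin i × Fin m) → Fin m,
      ∑ μ : Fin m → Equiv.Perm (Fin i),
        (if ((∀ a : Fin i, Function.Bijective fun b => idx (a, b)) ∧
            ∀ a : Fin i, Function.Bijective fun b => idx (μ b a, b))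
          then ((((∏ b, Equiv.Perm.sign (μ b) : ℤˣ) : ℤ)) : ℂ) else 0))
      = ∑ A : Fin i → Fin m → Fin m, ∑ μ : Fin m → Equiv.Perm (Fin i),
          (if ((∀ p, Function.Bijective (A p)) ∧
              ∀ p, Function.Bijective fun q => A (μ q p) q)
            then ((((∏ b, Equiv.Perm.sign (μ b) : ℤˣ) : ℤ)) : ℂ) else 0) := by
    refine (Fintype.sum_bijective (fun (A : Fin i → Fin m → Fin m) =>
      (fun x : Fin i × Fin m => A x.1 x.2))
      ((Equiv.curry (Fin i) (Fin m) (Fin m)).symm.bijective) _ _ (fun A => rfl)).symm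
  rw [reindex]
  have hcast := congrArg (fun z : ℤ => (z : ℂ)) (LatinAux.core i m)
  push_cast at hcast
  rw [← hcast]
  push_cast
  rfl
end

section
/- With notation as in the pairing formula for the Young symmetrizer (i = m case): ⟨v_o^{⊗m}, S(B_o)·v_{B_o}⟩ = #CELS(m) − #COLS(m), i.e., the pairing of the m-fold tensor power of the symmetrized dual basis vector with the Young-symmetrized tableau vector for the square tableau of shape (m^m) equals the number of column-even Latin (m,m)-squares minus the number of column-odd ones. Equivalently, ∑ ε(μ_1)···ε(μ_m), summed over m-tuples (μ_1,...,μ_m) ∈ S_m^m such that the matrix (μ_q(p))_{p,q} is a Latin square, equals #CELS(m) − #COLS(m). -/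
open Finset

/-- The number of column-even Latin `(m,m)`-squares. -/
noncomputable def CELS (m : ℕ) : ℕ :=
  Nat.card {A : Fin m → Fin m → Fin m // IsLatinRect A ∧ colSign A = 1}

/-- The number of column-odd Latin `(m,m)`-squares. -/
noncomputable def COLS (m : ℕ) : ℕ :=
  Nat.card {A : Fin m → Fin m → Fin m // IsLatinRect A ∧ colSign A = -1}

lemma sign_lemma {m : ℕ} (σ : Equiv.Perm (Fin m)) :
    Int.sign (∏ p : Fin m, ∏ p' ∈ Finset.univ.filter (fun p' => p < p'),
      (((σ p' : ℕ) : ℤ) - ((σ p : ℕ) : ℤ))) = (Equiv.Perm.sign σ : ℤ) := by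
  have hfil : ∀ p : Fin m, Finset.univ.filter (fun p' => p < p') = Finset.Ioi p := by
    intro p; ext x; simp
  simp_rw [hfil]
  have hv : (∏ p : Fin m, ∏ p' ∈ Finset.Ioi p, (((σ p' : ℕ) : ℤ) - ((σ p : ℕ) : ℤ)))
      = (Matrix.vandermonde (fun i : Fin m => ((σ i : ℕ) : ℤ))).det := by
    rw [Matrix.det_vandermonde]
  have hperm : (Matrix.vandermonde (fun i : Fin m => ((σ i : ℕ) : ℤ))).det
      = (Equiv.Perm.sign σ : ℤ) * (Matrix.vandermonde (fun i : Fin m => ((i : ℕ) : ℤ))).det := by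
    have := Matrix.det_permute σ (Matrix.vandermonde (fun i : Fin m => ((i : ℕ) : ℤ)))
    convert this using 2
    · rfl
    · exact (Int.cast_id).symm
  have hpos : 0 < (Matrix.vandermonde (fun i : Fin m => ((i : ℕ) : ℤ))).det := by
    rw [Matrix.det_vandermonde]
    apply Finset.prod_pos; intro i _
    apply Finset.prod_pos; intro j hj
    rw [Finset.mem_Ioi] at hj
    have : (i : ℕ) < (j : ℕ) := hj
    omega
  rw [hv, hperm]
  rcases Int.units_eq_one_or (Equiv.Perm.sign σ) with h | h <;>
    simp [h, Int.sign_eq_one_of_pos hpos,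
      Int.sign_eq_neg_one_of_neg (by linarith : -(Matrix.vandermonde (fun i : Fin m => ((i : ℕ) : ℤ))).det < 0)]

lemma colSign_toA {m : ℕ} (μ : Fin m → Equiv.Perm (Fin m)) :
    colSign (fun p q => μ q p) = ((∏ q, Equiv.Perm.sign (μ q) : ℤˣ) : ℤ) := by
  unfold colSign
  push_cast
  exact Finset.prod_congr rfl fun q _ => sign_lemma (μ q)

open scoped Classical in
/-- `⟨v_o^{⊗m}, S(B_o)·v_{B_o}⟩ = #CELS(m) − #COLS(m)`, in its equivalent combinatorial
form: the sum of `ε(μ_1) ⋯ ε(μ_m)` over the `m`-tuples `(μ_1,...,μ_m) ∈ S_m^m` such that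
the matrix `(μ_q(p))_{p,q}` is a Latin square (its columns are automatically permutations
of `[m]`, so this says each row is one too) equals the number of column-even Latin
`(m,m)`-squares minus the number of column-odd ones. -/
theorem signed_count_latin_squares (m : ℕ) :
    ∑ μ ∈ Finset.univ.filter
        (fun μ : Fin m → Equiv.Perm (Fin m) =>
          ∀ p : Fin m, Function.Bijective fun q => μ q p),
      ((∏ q, Equiv.Perm.sign (μ q) : ℤˣ) : ℤ)
      = (CELS m : ℤ) - (COLS m : ℤ) := by
  classical
  have key : ∀ A : Fin m → Fin m → Fin m, IsLatinRect A →
      ∀ q, Function.Bijective fun p => A p q := fun A hA q =>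
    Finite.injective_iff_bijective.mp (hA.2 q)
  have step1 : ∑ μ ∈ Finset.univ.filter
        (fun μ : Fin m → Equiv.Perm (Fin m) =>
          ∀ p : Fin m, Function.Bijective fun q => μ q p),
      ((∏ q, Equiv.Perm.sign (μ q) : ℤˣ) : ℤ)
      = ∑ A ∈ Finset.univ.filter (fun A : Fin m → Fin m → Fin m => IsLatinRect A),
          colSign A := by
    refine Finset.sum_bij' (fun μ _ => fun p q => μ q p)
      (fun A hA => fun q => Equiv.ofBijective (fun p => A p q)
        (key A (by simpa using (Finset.mem_filter.mp hA).2) q))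
      ?_ ?_ ?_ ?_ ?_
    · intro μ hμ
      simp only [Finset.mem_filter, Finset.mem_univ, true_and] at hμ ⊢
      exact ⟨fun p => hμ p, fun q => (μ q).injective⟩
    · intro A hA
      simp only [Finset.mem_filter, Finset.mem_univ, true_and] at hA ⊢
      intro p
      exact hA.1 p
    · intro μ hμ
      funext q
      ext p
      rfl
    · intro A hA
      rfl
    · intro μ hμ
      exact (colSign_toA μ).symm
  rw [step1]
  have hpm : ∀ A : Fin m → Fin m → Fin m, IsLatinRect A →
      colSign A = 1 ∨ colSign A = -1 := by
    intro A hA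
    set μ : Fin m → Equiv.Perm (Fin m) := fun q =>
      Equiv.ofBijective (fun p => A p q) (key A hA q) with hμ
    have : A = fun p q => μ q p := rfl
    rw [this, colSign_toA μ]
    rcases Int.units_eq_one_or (∏ q, Equiv.Perm.sign (μ q)) with h | h <;> simp [h]
  have hsplit : Finset.univ.filter (fun A : Fin m → Fin m → Fin m => IsLatinRect A)
      = Finset.univ.filter (fun A => IsLatinRect A ∧ colSign A = 1)
        ∪ Finset.univ.filter (fun A => IsLatinRect A ∧ colSign A = -1) := by
    ext A
    simp only [Finset.mem_filter, Finset.mem_union, Finset.mem_univ, true_and]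
    constructor
    · intro h; rcases hpm A h with h1 | h1
      · exact Or.inl ⟨h, h1⟩
      · exact Or.inr ⟨h, h1⟩
    · rintro (⟨h, _⟩ | ⟨h, _⟩) <;> exact h
  have hdisj : Disjoint
      (Finset.univ.filter (fun A : Fin m → Fin m → Fin m => IsLatinRect A ∧ colSign A = 1))
      (Finset.univ.filter (fun A => IsLatinRect A ∧ colSign A = -1)) := by
    rw [Finset.disjoint_left]
    intro A hA hA'
    simp only [Finset.mem_filter] at hA hA'
    have e1 := hA.2.2
    have e2 := hA'.2.2
    rw [e1] at e2
    exact absurd e2 (by norm_num)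
  rw [hsplit, Finset.sum_union hdisj]
  have h1 : ∑ A ∈ Finset.univ.filter
      (fun A : Fin m → Fin m → Fin m => IsLatinRect A ∧ colSign A = 1), colSign A
      = (CELS m : ℤ) := by
    rw [Finset.sum_congr rfl (fun A hA => (Finset.mem_filter.mp hA).2.2),
      Finset.sum_const, CELS, Nat.card_eq_fintype_card, Fintype.card_subtype]
    simp
  have h2 : ∑ A ∈ Finset.univ.filter
      (fun A : Fin m → Fin m → Fin m => IsLatinRect A ∧ colSign A = -1), colSign A
      = -(COLS m : ℤ) := by
    rw [Finset.sum_congr rfl (fun A hA => (Finset.mem_filter.mp hA).2.2),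
      Finset.sum_const, COLS, Nat.card_eq_fintype_card, Fintype.card_subtype]
    simp
  rw [h1, h2]; ring
end
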